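/- arXiv:1701.09185 — 7 statements merged into one kernel-verified Lean document; each statement's English description precedes it below -/
import Mathlib

section
/- Let σ ∈ X be a WR configuration on the K×L square lattice with periodic boundary conditions. If σ has a vertical m-bridge in some column and a horizontal m'-quasi-bridge in some row, then m = m'; likewise, if σ has a horizontal m-bridge in some row and a vertical m'-quasi-bridge in some column, then m = m'. (A bridge and a quasi-bridge of different colors cannot be perpendicular to each other.) -/
/-- Sites of the `K × L` square lattice with periodic boundary conditions:
`(j, i)` lies in column `c_j` and row `r_i`. -/
abbrev SiteP (K L : ℕ) := ZMod L × ZMod K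

/-- Adjacency on the periodic lattice: the two sites differ by `±1` in exactly
one coordinate (modulo `L` in the first, modulo `K` in the second). -/
def adjP (K L : ℕ) (v w : SiteP K L) : Prop :=
  (v.2 = w.2 ∧ (w.1 = v.1 + 1 ∨ v.1 = w.1 + 1)) ∨
  (v.1 = w.1 ∧ (w.2 = v.2 + 1 ∨ v.2 = w.2 + 1))

/-- Widom–Rowlinson configurations with `M` particle types on the periodic lattice. -/
def IsWRP (K L M : ℕ) (σ : SiteP K L → ℕ) : Prop :=
  (∀ v, σ v ≤ M) ∧ ∀ v w, adjP K L v w → σ v = 0 ∨ σ w = 0 ∨ σ v = σ w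

/-- `σ` has a vertical `m`-bridge in column `c_j`. -/
def VBridgeP (K L : ℕ) (σ : SiteP K L → ℕ) (m : ℕ) (j : ZMod L) : Prop :=
  ∀ i : ZMod K, σ (j, i) = m

/-- `σ` has a horizontal `m`-bridge in row `r_i`. -/
def HBridgeP (K L : ℕ) (σ : SiteP K L → ℕ) (m : ℕ) (i : ZMod K) : Prop :=
  ∀ j : ZMod L, σ (j, i) = m

/-- `σ` has a vertical `m`-quasi-bridge in column `c_j`: one empty site, all
other sites of the column occupied by type `m`. -/
def VQuasiP (K L : ℕ) (σ : SiteP K L → ℕ) (m : ℕ) (j : ZMod L) : Prop :=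
  ∃ i₀ : ZMod K, σ (j, i₀) = 0 ∧ ∀ i : ZMod K, i ≠ i₀ → σ (j, i) = m

/-- `σ` has a horizontal `m`-quasi-bridge in row `r_i`. -/
def HQuasiP (K L : ℕ) (σ : SiteP K L → ℕ) (m : ℕ) (i : ZMod K) : Prop :=
  ∃ j₀ : ZMod L, σ (j₀, i) = 0 ∧ ∀ j : ZMod L, j ≠ j₀ → σ (j, i) = m

/-- A bridge and a quasi-bridge of different colors cannot be perpendicular to
each other. -/
theorem bridge_quasibridge_not_perpendicular (K L M : ℕ)
    (hK : 2 ≤ K) (hL : 2 ≤ L) (hM : 2 ≤ M)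
    (σ : SiteP K L → ℕ) (hσ : IsWRP K L M σ)
    (m m' : ℕ) (hm1 : 1 ≤ m) (hmM : m ≤ M) (hm'1 : 1 ≤ m') (hm'M : m' ≤ M) :
    (∀ (j : ZMod L) (i : ZMod K), VBridgeP K L σ m j → HQuasiP K L σ m' i → m = m') ∧
    (∀ (i : ZMod K) (j : ZMod L), HBridgeP K L σ m i → VQuasiP K L σ m' j → m = m') := by
  constructor
  · rintro j i hb ⟨j₀, h0, hrest⟩
    by_cases h : j = j₀
    · have := hb i; rw [h, h0] at this; omega
    · have h1 := hb i
      have h2 := hrest j h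
      omega
  · rintro i j hb ⟨i₀, h0, hrest⟩
    by_cases h : i = i₀
    · have := hb j; rw [h, h0] at this; omega
    · have h1 := hb j
      have h2 := hrest i h
      omega
end

section
/- Let σ ∈ X be a WR configuration on the K×L square lattice with periodic boundary conditions. Suppose σ has a vertical m-quasi-bridge in column c_j whose unique empty site is v, and a horizontal m'-quasi-bridge in row r_i whose unique empty site is w, with m ≠ m'. Then v = w = (j,i), the intersection site of column c_j and row r_i. (Two perpendicular quasi-bridges of different colors must meet in their empty site.) -/
/-- Two perpendicular quasi-bridges of different colors must meet in their
(unique) empty site: if `σ` has a vertical `m`-quasi-bridge in column `c_j` with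
empty site `(j, a)` and a horizontal `m'`-quasi-bridge in row `r_i` with empty
site `(b, i)`, and `m ≠ m'`, then both empty sites equal the intersection site
`(j, i)`. -/
theorem quasibridges_meet_in_empty_site (K L M : ℕ)
    (hK : 2 ≤ K) (hL : 2 ≤ L) (hM : 2 ≤ M)
    (σ : SiteP K L → ℕ) (hσ : IsWRP K L M σ)
    (m m' : ℕ) (hm1 : 1 ≤ m) (hmM : m ≤ M) (hm'1 : 1 ≤ m') (hm'M : m' ≤ M)
    (hne : m ≠ m') (j : ZMod L) (i : ZMod K) (a : ZMod K) (b : ZMod L)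
    (hcol0 : σ (j, a) = 0) (hcol : ∀ i' : ZMod K, i' ≠ a → σ (j, i') = m)
    (hrow0 : σ (b, i) = 0) (hrow : ∀ j' : ZMod L, j' ≠ b → σ (j', i) = m') :
    a = i ∧ b = j := by
  have ha : a = i := by
    by_contra h
    have hm : σ (j, i) = m := hcol i (fun hh => h hh.symm)
    by_cases hb : j = b
    · rw [hb, hrow0] at hm; omega
    · have := hrow j hb; omega
  have hb : b = j := by
    by_contra h
    have := hrow j (fun hh => h hh.symm)
    rw [← ha, hcol0] at this; omega
  exact ⟨ha, hb⟩
end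

section
/- Consider the Widom–Rowlinson model with M ≥ 2 particle types on the K×L square lattice Λ with periodic boundary conditions, with K + L ≥ 6, and set Γ(Λ) = 2K if K = L and Γ(Λ) = min{2K,2L} + 1 if K ≠ L. Then every non-stable WR configuration σ ∈ X \ X^s satisfies Φ(σ, X^s) − H(σ) < Γ(Λ). -/
/-- The energy `H(σ) = -#{v : σ v ≠ 0}`. -/
noncomputable def HP (K L : ℕ) (σ : SiteP K L → ℕ) : ℤ :=
  -(Nat.card {v : SiteP K L // σ v ≠ 0} : ℤ)

/-- `σ` and `σ'` are related by a single-site update: they differ at exactly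
one site `v`, and moreover `σ v = 0` or `σ' v = 0`. -/
def UpdP (K L : ℕ) (σ σ' : SiteP K L → ℕ) : Prop :=
  ∃ v, (σ v = 0 ∨ σ' v = 0) ∧ σ v ≠ σ' v ∧ ∀ w, w ≠ v → σ w = σ' w

/-- A path `ω : σ → σ'`: a finite nonempty sequence of WR configurations from
`σ` to `σ'` whose consecutive configurations coincide or are related by a
single-site update. -/
def IsPathP (K L M : ℕ) (ω : List (SiteP K L → ℕ)) (σ σ' : SiteP K L → ℕ) : Prop :=
  ω ≠ [] ∧ ω.head? = some σ ∧ ω.getLast? = some σ' ∧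
    (∀ η ∈ ω, IsWRP K L M η) ∧
    ω.Chain' (fun η η' => η = η' ∨ UpdP K L η η')

/-- The height `Φ_ω` of a path: the maximum energy along it. -/
noncomputable def heightP (K L : ℕ) (ω : List (SiteP K L → ℕ)) : ℤ :=
  sSup {h : ℤ | ∃ η ∈ ω, HP K L η = h}

/-- The communication height `Φ(σ,σ')`: the minimal height over all paths
`ω : σ → σ'`. -/
noncomputable def commP (K L M : ℕ) (σ σ' : SiteP K L → ℕ) : ℤ :=
  sInf {h : ℤ | ∃ ω, IsPathP K L M ω σ σ' ∧ heightP K L ω = h}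

/-- The set `X^s = {s^(1),…,s^(M)}` of stable configurations. -/
def stableP (K L M : ℕ) : Set (SiteP K L → ℕ) :=
  {σ | ∃ m : ℕ, 1 ≤ m ∧ m ≤ M ∧ σ = fun _ => m}

/-- The energy barrier `Γ(Λ)` for the periodic `K × L` lattice. -/
noncomputable def GammaP (K L : ℕ) : ℤ :=
  if K = L then (2 * K : ℤ) else ((min (2 * K) (2 * L) : ℕ) : ℤ) + 1

/-- `Φ(σ, A) = min_{σ' ∈ A} Φ(σ, σ')`. -/
noncomputable def commSetP (K L M : ℕ) (σ : SiteP K L → ℕ)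
    (A : Set (SiteP K L → ℕ)) : ℤ :=
  sInf {h : ℤ | ∃ σ' ∈ A, commP K L M σ σ' = h}

namespace WRaux

set_option linter.unusedSectionVars false

lemma val_pred {n : ℕ} [NeZero n] (x : ZMod n) (hx : x ≠ 0) : (x - 1).val = x.val - 1 := by
  have h1 : 1 ≤ x.val := Nat.one_le_iff_ne_zero.2 (fun h => hx (by rwa [← ZMod.val_eq_zero]))
  have hlt : x.val - 1 < n := lt_of_le_of_lt (Nat.sub_le _ _) x.val_lt
  have hx' : x - 1 = ((x.val - 1 : ℕ) : ZMod n) := by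
    have : ((x.val : ℕ) : ZMod n) = x := ZMod.natCast_zmod_val x
    rw [Nat.cast_sub h1, this, Nat.cast_one]
  rw [hx', ZMod.val_cast_of_lt hlt]

section Sweep
variable {K L : ℕ}

def colIdx (v : SiteP K L) : ℕ := (v.1 - 1).val
def pos (v : SiteP K L) : ℕ := colIdx v * K + v.2.val
def clearT (v : SiteP K L) : ℕ := if v.1 = 0 then v.2.val else K + 3 * pos v + 1
def setT (v : SiteP K L) : ℕ := 4 * K + 3 * pos v + 2

variable [NeZero K] [NeZero L]

lemma adjP_symm {v w : SiteP K L} (h : adjP K L v w) : adjP K L w v := by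
  unfold adjP at *; tauto

lemma colIdx_zero {v : SiteP K L} (hv : v.1 = 0) : colIdx v = L - 1 := by
  have hL1 : 1 ≤ L := Nat.one_le_iff_ne_zero.2 (NeZero.ne L)
  unfold colIdx
  rw [hv]
  have h0 : (0 : ZMod L) - 1 = ((L - 1 : ℕ) : ZMod L) := by
    rw [Nat.cast_sub hL1, ZMod.natCast_self, Nat.cast_one, zero_sub]
  rw [h0, ZMod.val_cast_of_lt (by omega : L - 1 < L)]

lemma colIdx_of_ne {v : SiteP K L} (hv : v.1 ≠ 0) :
    colIdx v = v.1.val - 1 ∧ 1 ≤ v.1.val := by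
  have h1 : 1 ≤ v.1.val := Nat.one_le_iff_ne_zero.2
    (fun h => hv (by rwa [← ZMod.val_eq_zero]))
  exact ⟨val_pred v.1 hv, h1⟩

lemma colIdx_succ {v w : SiteP K L} (h : w.1 = v.1 + 1) : colIdx w = v.1.val := by
  unfold colIdx; rw [h]; simp

/-- a neighbour `v` of a site `w` not in column `0` has `pos w ≤ pos v + K`. -/
lemma pos_adj_le {v w : SiteP K L} (hadj : adjP K L v w) (hw : w.1 ≠ 0) :
    pos w ≤ pos v + K := by
  have h2v : v.2.val < K := ZMod.val_lt _
  have h2w : w.2.val < K := ZMod.val_lt _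
  rcases hadj with ⟨h2, hr | hl⟩ | ⟨h1, _⟩ <;>
    try have h22 : v.2.val = w.2.val := by rw [h2]
  · -- w = v + (1,0)
    have hciw : colIdx w = v.1.val := colIdx_succ hr
    by_cases hv0 : v.1 = 0
    · have hw0 : colIdx w = 0 := by rw [hciw, hv0, ZMod.val_zero]
      unfold pos; rw [hw0]; omega
    · obtain ⟨hciv, hv1⟩ := colIdx_of_ne hv0
      obtain ⟨b, hb⟩ : ∃ b, v.1.val = b + 1 := ⟨v.1.val - 1, by omega⟩
      unfold pos
      rw [hciw, hciv, hb, Nat.add_sub_cancel, Nat.succ_mul]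
      omega
  · -- v = w + (1,0)
    have hciv : colIdx v = w.1.val := colIdx_succ hl
    obtain ⟨hciw, hw1⟩ := colIdx_of_ne hw
    obtain ⟨b, hb⟩ : ∃ b, w.1.val = b + 1 := ⟨w.1.val - 1, by omega⟩
    unfold pos
    rw [hciw, hciv, hb, Nat.add_sub_cancel, Nat.succ_mul]
    omega
  · -- same column
    unfold pos colIdx
    rw [h1]
    omega

lemma clearT_lt_setT (v : SiteP K L) : clearT v < setT v := by
  have h2v : v.2.val < K := ZMod.val_lt _
  have hK1 : 1 ≤ K := Nat.one_le_iff_ne_zero.2 (NeZero.ne K)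
  unfold clearT setT; split <;> omega

lemma clearT_le_setT_adj {v w : SiteP K L} (hadj : adjP K L v w) :
    clearT w ≤ setT v := by
  have h2w : w.2.val < K := ZMod.val_lt _
  by_cases hw : w.1 = 0
  · unfold clearT setT; rw [if_pos hw]; omega
  · have := pos_adj_le hadj hw
    unfold clearT setT; rw [if_neg hw]; omega

lemma clearT_ne_setT (v w : SiteP K L) : clearT v ≠ setT w := by
  have h2v : v.2.val < K := ZMod.val_lt _
  unfold clearT setT; split <;> omega

lemma pos_lt (v : SiteP K L) : pos v < K * L := by
  have h1 : colIdx v + 1 ≤ L := (ZMod.val_lt _)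
  have h2 : v.2.val < K := ZMod.val_lt _
  calc colIdx v * K + v.2.val < (colIdx v + 1) * K := by nlinarith
  _ ≤ L * K := Nat.mul_le_mul_right _ h1
  _ = K * L := Nat.mul_comm _ _

lemma pos_inj {v w : SiteP K L} (h : pos v = pos w) : v = w := by
  have h2v : v.2.val < K := ZMod.val_lt _
  have h2w : w.2.val < K := ZMod.val_lt _
  have hcol : colIdx v = colIdx w ∧ v.2.val = w.2.val := by
    constructor
    · have := congrArg (· / K) h
      simpa [pos, Nat.add_mul_div_left, Nat.mul_add_div, Nat.div_eq_of_lt, h2v, h2w,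
        Nat.mul_div_cancel, Nat.pos_of_ne_zero (NeZero.ne K),
        Nat.mul_comm, Nat.mul_add_div (Nat.pos_of_ne_zero (NeZero.ne K))] using this
    · have := congrArg (· % K) h
      simpa [pos, Nat.mul_add_mod, Nat.mod_eq_of_lt, h2v, h2w, Nat.add_mul_mod_self_left,
        Nat.mul_comm] using this
  have hv1 : v.1 = w.1 := by
    have := ZMod.val_injective L hcol.1
    have : v.1 - 1 = w.1 - 1 := this
    have := congrArg (· + 1) this
    simpa using this
  have hv2 : v.2 = w.2 := ZMod.val_injective K hcol.2
  exact Prod.ext hv1 hv2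

lemma clearT_inj {v w : SiteP K L} (h : clearT v = clearT w) : v = w := by
  have h2v : v.2.val < K := ZMod.val_lt _
  have h2w : w.2.val < K := ZMod.val_lt _
  unfold clearT at h
  by_cases hv : v.1 = 0 <;> by_cases hw : w.1 = 0
  · rw [if_pos hv, if_pos hw] at h
    exact Prod.ext (hv.trans hw.symm) (ZMod.val_injective K h)
  · rw [if_pos hv, if_neg hw] at h; omega
  · rw [if_neg hv, if_pos hw] at h; omega
  · rw [if_neg hv, if_neg hw] at h
    exact pos_inj (by omega)

lemma setT_inj {v w : SiteP K L} (h : setT v = setT w) : v = w := by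
  unfold setT at h; exact pos_inj (by omega)

end Sweep

end WRaux
section Sweep2
namespace WRaux
variable {K L M : ℕ}

def cfg (m : ℕ) (σ : SiteP K L → ℕ) (t : ℕ) (v : SiteP K L) : ℕ :=
  if setT v < t then m
  else if (σ v ≠ 0 ∧ σ v ≠ m) ∧ clearT v < t then 0
  else σ v

variable [NeZero K] [NeZero L]

lemma cfg_zero (m : ℕ) (σ : SiteP K L → ℕ) : cfg m σ 0 = σ := by
  funext v; unfold cfg; simp

lemma cfg_final (m : ℕ) (σ : SiteP K L → ℕ) {t : ℕ} (ht : 4 * K + 3 * (K * L) ≤ t) :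
    cfg m σ t = fun _ => m := by
  funext v
  have := pos_lt (K := K) (L := L) v
  unfold cfg setT
  rw [if_pos (by omega)]

lemma cfg_cases (m : ℕ) (σ : SiteP K L → ℕ) (t : ℕ) (v : SiteP K L) :
    (setT v < t ∧ cfg m σ t v = m) ∨ cfg m σ t v = 0 ∨
    (cfg m σ t v = σ v ∧ ¬ setT v < t ∧ ((σ v ≠ 0 ∧ σ v ≠ m) → ¬ clearT v < t)) := by
  unfold cfg
  by_cases h1 : setT v < t
  · left; rw [if_pos h1]; exact ⟨h1, rfl⟩
  · rw [if_neg h1]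
    by_cases h2 : (σ v ≠ 0 ∧ σ v ≠ m) ∧ clearT v < t
    · right; left; rw [if_pos h2]
    · rw [if_neg h2]
      right; right
      refine ⟨rfl, h1, fun hc hcl => h2 ⟨hc, hcl⟩⟩

lemma cfg_change {m : ℕ} {σ : SiteP K L → ℕ} {t : ℕ} {v : SiteP K L}
    (h : cfg m σ t v ≠ cfg m σ (t + 1) v) :
    (setT v = t ∧ cfg m σ t v = 0 ∧ cfg m σ (t + 1) v = m) ∨
    ((σ v ≠ 0 ∧ σ v ≠ m) ∧ clearT v = t ∧ cfg m σ t v = σ v ∧ cfg m σ (t + 1) v = 0) := by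
  have hcs := clearT_lt_setT v
  unfold cfg at h ⊢
  by_cases h1 : setT v < t
  · rw [if_pos h1, if_pos (by omega)] at h; exact absurd rfl h
  · rw [if_neg h1] at h ⊢
    by_cases h1' : setT v < t + 1
    · -- setT v = t
      have hst : setT v = t := by omega
      rw [if_pos h1'] at h
      left
      refine ⟨hst, ?_, by rw [if_pos h1']⟩
      by_cases h2 : (σ v ≠ 0 ∧ σ v ≠ m) ∧ clearT v < t
      · rw [if_pos h2]
      · rw [if_neg h2] at h ⊢
        rcases Decidable.em (σ v = 0) with h0 | h0
        · exact h0
        · rcases Decidable.em (σ v = m) with hm | hm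
          · exact absurd hm.symm (by simpa [hm] using h)
          · exact absurd ⟨⟨h0, hm⟩, by omega⟩ h2
    · rw [if_neg h1'] at h
      by_cases h2 : (σ v ≠ 0 ∧ σ v ≠ m) ∧ clearT v < t
      · rw [if_pos h2, if_pos ⟨h2.1, by omega⟩] at h; exact absurd rfl h
      · rw [if_neg h2] at h ⊢
        by_cases h2' : (σ v ≠ 0 ∧ σ v ≠ m) ∧ clearT v < t + 1
        · rw [if_pos h2'] at h
          right
          exact ⟨h2'.1, by omega, rfl, by rw [if_neg h1', if_pos h2']⟩
        · rw [if_neg h2'] at h; exact absurd rfl h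

lemma cfg_step (m : ℕ) (σ : SiteP K L → ℕ) (t : ℕ) :
    cfg m σ t = cfg m σ (t + 1) ∨ UpdP K L (cfg m σ t) (cfg m σ (t + 1)) := by
  by_cases hall : ∀ v, cfg m σ t v = cfg m σ (t + 1) v
  · exact Or.inl (funext hall)
  · push_neg at hall
    obtain ⟨v, hv⟩ := hall
    right
    refine ⟨v, ?_, hv, ?_⟩
    · rcases cfg_change hv with ⟨_, h0, _⟩ | ⟨_, _, _, h0⟩
      · exact Or.inl h0
      · exact Or.inr h0
    · intro w hw
      by_contra hwc
      rcases cfg_change hv with ⟨hv1, _, _⟩ | ⟨_, hv1, _, _⟩ <;>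
        rcases cfg_change hwc with ⟨hw1, _, _⟩ | ⟨_, hw1, _, _⟩
      · exact hw (setT_inj (hw1.trans hv1.symm))
      · exact clearT_ne_setT w v (hw1.trans hv1.symm)
      · exact clearT_ne_setT v w (hv1.trans hw1.symm)
      · exact hw (clearT_inj (hw1.trans hv1.symm))

lemma cfg_isWR {m : ℕ} {σ : SiteP K L → ℕ} (hσ : IsWRP K L M σ)
    (hm1 : 1 ≤ m) (hmM : m ≤ M) (t : ℕ) : IsWRP K L M (cfg m σ t) := by
  constructor
  · intro v
    unfold cfg
    split
    · exact hmM
    · split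
      · exact Nat.zero_le M
      · exact hσ.1 v
  · intro v w hadj
    rcases cfg_cases m σ t v (K := K) (L := L) with ⟨hsv, hv⟩ | hv | ⟨hv, hsv, hcv⟩
    · rcases cfg_cases m σ t w (K := K) (L := L) with ⟨hsw, hw⟩ | hw | ⟨hw, hsw, hcw⟩
      · right; right; rw [hv, hw]
      · right; left; exact hw
      · -- v is m, w original
        rcases Decidable.em (σ w = 0) with h0 | h0
        · right; left; rw [hw]; exact h0
        · rcases Decidable.em (σ w = m) with hm | hm
          · right; right; rw [hv, hw, hm]
          · exfalso
            exact hcw ⟨h0, hm⟩ (by have := clearT_le_setT_adj hadj; omega)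
    · left; exact hv
    · rcases cfg_cases m σ t w (K := K) (L := L) with ⟨hsw, hw⟩ | hw | ⟨hw, hsw, hcw⟩
      · -- w is m, v original
        rcases Decidable.em (σ v = 0) with h0 | h0
        · left; rw [hv]; exact h0
        · rcases Decidable.em (σ v = m) with hm | hm
          · right; right; rw [hv, hw, hm]
          · exfalso
            exact hcv ⟨h0, hm⟩
              (by have := clearT_le_setT_adj (adjP_symm hadj); omega)
      · right; left; exact hw
      · rw [hv, hw]; exact hσ.2 v w hadj

end WRaux
end Sweep2

namespace WRaux
set_option linter.unusedSectionVars false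
section Energy
variable {K L M : ℕ} [NeZero K] [NeZero L]

lemma HP_eq_filter (σ : SiteP K L → ℕ) :
    HP K L σ = -((Finset.univ.filter (fun v : SiteP K L => σ v ≠ 0)).card : ℤ) := by
  unfold HP
  congr 1
  rw [Nat.card_eq_fintype_card, Fintype.card_subtype]

lemma window_card (t : ℕ) :
    ((Finset.range (K * L)).filter
      (fun n => t ≤ 4 * K + 3 * n + 2 ∧ K + 3 * n + 1 < t)).card ≤ K + 1 := by
  set P := (Finset.range (K * L)).filter
      (fun n => t ≤ 4 * K + 3 * n + 2 ∧ K + 3 * n + 1 < t)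
  rcases P.eq_empty_or_nonempty with he | hne
  · rw [he]; simp
  · have hsub : P ⊆ Finset.Icc (P.min' hne) (P.min' hne + K) := by
      intro n hn
      have h1 := P.min'_le n hn
      have h2 := (Finset.mem_filter.1 (P.min'_mem hne)).2
      have h3 := (Finset.mem_filter.1 hn).2
      rw [Finset.mem_Icc]
      omega
    calc P.card ≤ _ := Finset.card_le_card hsub
    _ = K + 1 := by rw [Nat.card_Icc]; omega

lemma energy_bound {m : ℕ} {σ : SiteP K L → ℕ} (hm1 : 1 ≤ m) (t : ℕ) :
    HP K L (cfg m σ t) ≤ HP K L σ +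
      (((Finset.univ.filter (fun v : SiteP K L => v.1 = 0 ∧ σ v ≠ 0 ∧ σ v ≠ m)).card : ℤ)
        + K + 1) := by
  classical
  set s := (Finset.univ.filter (fun v : SiteP K L => v.1 = 0 ∧ σ v ≠ 0 ∧ σ v ≠ m)).card with hs
  set D := Finset.univ.filter
    (fun v : SiteP K L => (σ v ≠ 0 ∧ σ v ≠ m) ∧ clearT v < t ∧ ¬ setT v < t) with hD
  have hsub : Finset.univ.filter (fun v : SiteP K L => σ v ≠ 0) ⊆
      (Finset.univ.filter (fun v : SiteP K L => cfg m σ t v ≠ 0)) ∪ D := by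
    intro v hv
    rw [Finset.mem_filter] at hv
    rcases Decidable.em (cfg m σ t v = 0) with h0 | h0
    · refine Finset.mem_union_right _ ?_
      rw [hD, Finset.mem_filter]
      refine ⟨Finset.mem_univ v, ?_⟩
      unfold cfg at h0
      by_cases h1 : setT v < t
      · rw [if_pos h1] at h0; omega
      · rw [if_neg h1] at h0
        by_cases h2 : (σ v ≠ 0 ∧ σ v ≠ m) ∧ clearT v < t
        · exact ⟨h2.1, h2.2, h1⟩
        · rw [if_neg h2] at h0; exact absurd h0 hv.2
    · exact Finset.mem_union_left _ (by rw [Finset.mem_filter]; exact ⟨hv.1, h0⟩)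
  have hDcard : D.card ≤ s + (K + 1) := by
    have hsplit : D.card = (D.filter (fun v => v.1 = 0)).card
        + (D.filter (fun v => ¬ v.1 = 0)).card :=
      (Finset.card_filter_add_card_filter_not (s := D) (fun v => v.1 = 0)).symm
    have h1 : (D.filter (fun v => v.1 = 0)).card ≤ s := by
      apply Finset.card_le_card
      intro v hv
      rw [Finset.mem_filter] at hv ⊢
      obtain ⟨hvD, hv0⟩ := hv
      rw [hD, Finset.mem_filter] at hvD
      exact ⟨Finset.mem_univ v, hv0, hvD.2.1⟩
    have h2 : (D.filter (fun v => ¬ v.1 = 0)).card ≤ K + 1 := by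
      have := window_card (K := K) (L := L) t
      refine le_trans (Finset.card_le_card_of_injOn pos ?_ ?_) this
      · intro v hv
        rw [Finset.mem_coe, Finset.mem_filter] at hv ⊢
        obtain ⟨hvD, hv0⟩ := hv
        rw [hD, Finset.mem_filter] at hvD
        obtain ⟨_, _, hcl, hst⟩ := hvD
        unfold clearT at hcl
        rw [if_neg hv0] at hcl
        unfold setT at hst
        exact ⟨Finset.mem_range.2 (pos_lt v), by omega, by omega⟩
      · intro a _ b _ hab
        exact pos_inj hab
    omega
  have hcard : (Finset.univ.filter (fun v : SiteP K L => σ v ≠ 0)).card ≤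
      (Finset.univ.filter (fun v : SiteP K L => cfg m σ t v ≠ 0)).card + (s + (K + 1)) := by
    calc (Finset.univ.filter (fun v : SiteP K L => σ v ≠ 0)).card
        ≤ ((Finset.univ.filter (fun v : SiteP K L => cfg m σ t v ≠ 0)) ∪ D).card :=
          Finset.card_le_card hsub
      _ ≤ _ + D.card := Finset.card_union_le _ _
      _ ≤ _ := by omega
  rw [HP_eq_filter, HP_eq_filter]
  push_cast
  omega

end Energy

section Choose
variable {K L M : ℕ} [NeZero K] [NeZero L]

lemma exists_zero_on_arc {σ : SiteP K L → ℕ} (hσ : IsWRP K L M σ)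
    {a b : ZMod K} (ha : σ (0, a) ≠ 0) (hb : σ (0, b) ≠ 0)
    (hab : σ (0, a) ≠ σ (0, b)) :
    ∃ u : ℕ, 0 < u ∧ u < (b - a).val ∧ σ (0, a + (u : ZMod K)) = 0 := by
  have hne : a ≠ b := fun h => hab (by rw [h])
  have hd0 : (b - a).val ≠ 0 := by
    intro h
    rw [ZMod.val_eq_zero, sub_eq_zero] at h
    exact hne h.symm
  by_contra hno
  push_neg at hno
  have key : ∀ u : ℕ, u ≤ (b - a).val → σ (0, a + (u : ZMod K)) = σ (0, a) := by
    intro u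
    induction u with
    | zero => intro _; simp
    | succ u ih =>
      intro hu
      have hprev := ih (by omega)
      have hadj : adjP K L ((0 : ZMod L), a + (u : ZMod K)) (0, a + ((u + 1 : ℕ) : ZMod K)) := by
        right
        constructor
        · rfl
        · left; push_cast; ring
      rcases hσ.2 _ _ hadj with h0 | h0 | h0
      · rw [hprev] at h0; exact absurd h0 ha
      · exfalso
        rcases Nat.lt_or_ge (u + 1) ((b - a).val) with hlt | hge
        · exact hno (u+1) (by omega) hlt h0
        · have hueq : u + 1 = (b - a).val := by omega
          have : a + ((u + 1 : ℕ) : ZMod K) = b := by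
            rw [hueq, ZMod.natCast_zmod_val, add_sub_cancel]
          rw [this] at h0
          exact hb h0
      · rw [← h0, hprev]
  have := key ((b - a).val) le_rfl
  rw [ZMod.natCast_zmod_val, add_sub_cancel] at this
  exact hab this.symm

lemma two_zeros {σ : SiteP K L → ℕ} (hσ : IsWRP K L M σ)
    {a b : ZMod K} (ha : σ (0, a) ≠ 0) (hb : σ (0, b) ≠ 0)
    (hab : σ (0, a) ≠ σ (0, b)) :
    ∃ z₁ z₂ : ZMod K, z₁ ≠ z₂ ∧ σ (0, z₁) = 0 ∧ σ (0, z₂) = 0 := by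
  obtain ⟨u, hu0, hud, huz⟩ := exists_zero_on_arc hσ ha hb hab
  obtain ⟨u', hu0', hud', huz'⟩ := exists_zero_on_arc hσ hb ha (Ne.symm hab)
  have hne : a ≠ b := fun h => hab (by rw [h])
  set d := (b - a).val with hd
  set d' := (a - b).val with hd'
  have hdd' : d + d' = K := by
    have h1 : a - b = -(b - a) := by ring
    have h2 : (b - a) ≠ 0 := sub_ne_zero.2 (Ne.symm hne)
    rw [hd', h1, ZMod.neg_val, if_neg h2]
    have := ZMod.val_lt (b - a)
    omega
  refine ⟨a + (u : ZMod K), b + (u' : ZMod K), ?_, huz, huz'⟩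
  intro heq
  have hb' : b = a + (d : ZMod K) := by rw [hd, ZMod.natCast_zmod_val]; ring
  rw [hb'] at heq
  have heq2 : ((u : ℕ) : ZMod K) = ((d + u' : ℕ) : ZMod K) := by
    push_cast
    rw [add_assoc] at heq
    exact add_left_cancel heq
  have hvlt := ZMod.val_lt (b - a)
  have hu_lt : u < K := by omega
  have hdu_lt : d + u' < K := by omega
  have := congrArg ZMod.val heq2
  rw [ZMod.val_cast_of_lt hu_lt, ZMod.val_cast_of_lt hdu_lt] at this
  omega

lemma chooseM {σ : SiteP K L → ℕ} (hσ : IsWRP K L M σ) (hK : 2 ≤ K) (hM : 1 ≤ M) :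
    ∃ m : ℕ, 1 ≤ m ∧ m ≤ M ∧
      (Finset.univ.filter (fun v : SiteP K L => v.1 = 0 ∧ σ v ≠ 0 ∧ σ v ≠ m)).card ≤ K - 2 := by
  classical
  by_cases hone : ∀ i i' : ZMod K, σ (0, i) ≠ 0 → σ (0, i') ≠ 0 → σ (0, i) = σ (0, i')
  · by_cases hex : ∃ i : ZMod K, σ (0, i) ≠ 0
    · obtain ⟨i₀, hi₀⟩ := hex
      refine ⟨σ (0, i₀), Nat.one_le_iff_ne_zero.2 hi₀, hσ.1 _, ?_⟩
      have : (Finset.univ.filter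
          (fun v : SiteP K L => v.1 = 0 ∧ σ v ≠ 0 ∧ σ v ≠ σ (0, i₀))) = ∅ := by
        rw [Finset.filter_eq_empty_iff]
        rintro v -
        intro ⟨hv0, hvne, hvm⟩
        have hv : v = ((0 : ZMod L), v.2) := Prod.ext hv0 rfl
        rw [hv] at hvne hvm
        exact hvm (hone v.2 i₀ hvne hi₀)
      rw [this]; simp
    · push_neg at hex
      refine ⟨1, le_rfl, hM, ?_⟩
      have : (Finset.univ.filter
          (fun v : SiteP K L => v.1 = 0 ∧ σ v ≠ 0 ∧ σ v ≠ 1)) = ∅ := by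
        rw [Finset.filter_eq_empty_iff]
        rintro v -
        intro ⟨hv0, hvne, _⟩
        have hv : v = ((0 : ZMod L), v.2) := Prod.ext hv0 rfl
        rw [hv] at hvne
        exact hvne (hex v.2)
      rw [this]; simp
  · push_neg at hone
    obtain ⟨a, b, ha, hb, hab⟩ := hone
    obtain ⟨z₁, z₂, hz, hz1, hz2⟩ := two_zeros hσ ha hb hab
    refine ⟨1, le_rfl, hM, ?_⟩
    have hcard2 : ({z₁, z₂} : Finset (ZMod K)).card = 2 := by
      rw [Finset.card_insert_of_notMem (by simpa using hz), Finset.card_singleton]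
    calc (Finset.univ.filter
        (fun v : SiteP K L => v.1 = 0 ∧ σ v ≠ 0 ∧ σ v ≠ 1)).card
        ≤ ((Finset.univ : Finset (ZMod K)) \ {z₁, z₂}).card := by
          apply Finset.card_le_card_of_injOn (fun v => v.2)
          · intro v hv
            rw [Finset.mem_coe, Finset.mem_filter] at hv
            obtain ⟨-, hv0, hvne, -⟩ := hv
            rw [Finset.mem_coe, Finset.mem_sdiff]
            refine ⟨Finset.mem_univ _, ?_⟩
            intro hmem
            have hv : v = ((0 : ZMod L), v.2) := Prod.ext hv0 rfl
            rw [hv] at hvne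
            rcases Finset.mem_insert.1 hmem with h | h
            · rw [show v.2 = z₁ from h] at hvne; exact hvne hz1
            · rw [show v.2 = z₂ from Finset.mem_singleton.1 h] at hvne; exact hvne hz2
          · intro x hx y hy hxy
            rw [Finset.mem_coe, Finset.mem_filter] at hx hy
            exact Prod.ext (hx.2.1.trans hy.2.1.symm) hxy
      _ ≤ K - 2 := by
          rw [Finset.card_sdiff_of_subset (by simp)]
          simp [hcard2, ZMod.card]
end Choose
end WRaux

namespace WRaux
set_option linter.unusedSectionVars false

/-- Master construction: a path from `σ` to a constant configuration whose
energy never exceeds `HP σ + 2K - 1`. -/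
lemma sweep (K L M : ℕ) (hK : 2 ≤ K) (hL : 2 ≤ L) (hM : 2 ≤ M)
    (σ : SiteP K L → ℕ) (hσ : IsWRP K L M σ) :
    ∃ (m : ℕ) (ω : List (SiteP K L → ℕ)), 1 ≤ m ∧ m ≤ M ∧
      IsPathP K L M ω σ (fun _ => m) ∧
      ∀ η ∈ ω, HP K L η ≤ HP K L σ + (2 * (K : ℤ) - 1) := by
  haveI : NeZero K := ⟨by omega⟩
  haveI : NeZero L := ⟨by omega⟩
  obtain ⟨m, hm1, hmM, hs⟩ := chooseM (K := K) (L := L) hσ hK (by omega)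
  set T := 4 * K + 3 * (K * L) with hT
  refine ⟨m, (List.range (T + 1)).map (cfg m σ), hm1, hmM, ⟨?_, ?_, ?_, ?_, ?_⟩, ?_⟩
  · simp [List.range_succ]
  · rw [List.head?_map, List.range_succ_eq_map]
    simp [cfg_zero]
  · rw [List.getLast?_map, List.range_succ, List.getLast?_concat]
    simp [cfg_final m σ (le_refl T)]
  · intro η hη
    obtain ⟨t, _, rfl⟩ := List.mem_map.1 hη
    exact cfg_isWR hσ hm1 hmM t
  · show List.IsChain _ _
    rw [List.isChain_map]
    rw [List.isChain_range_succ]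
    intro t _
    exact cfg_step m σ t
  · intro η hη
    obtain ⟨t, _, rfl⟩ := List.mem_map.1 hη
    refine le_trans (energy_bound hm1 t) ?_
    have : ((Finset.univ.filter
        (fun v : SiteP K L => v.1 = 0 ∧ σ v ≠ 0 ∧ σ v ≠ m)).card : ℤ) ≤ (K : ℤ) - 2 := by
      have := hs; omega
    omega

/-! ### transposition -/

lemma adj_swap {K L : ℕ} {v w : SiteP K L} (h : adjP K L v w) :
    adjP L K v.swap w.swap := by
  unfold adjP at *
  simp only [Prod.fst_swap, Prod.snd_swap]
  tauto

lemma HP_swap {K L : ℕ} (η : SiteP L K → ℕ) :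
    HP L K η = HP K L (η ∘ Prod.swap) := by
  unfold HP
  congr 1
  congr 1
  apply Nat.card_congr
  exact (Equiv.subtypeEquiv (Equiv.prodComm (ZMod L) (ZMod K)) (by intro a; rfl)).symm

lemma isWR_swap {K L M : ℕ} {η : SiteP L K → ℕ} (h : IsWRP L K M η) :
    IsWRP K L M (η ∘ Prod.swap) := by
  refine ⟨fun v => h.1 _, fun v w hadj => h.2 _ _ (adj_swap hadj)⟩

lemma upd_swap {K L : ℕ} {η η' : SiteP L K → ℕ} (h : UpdP L K η η') :
    UpdP K L (η ∘ Prod.swap) (η' ∘ Prod.swap) := by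
  obtain ⟨v, h0, hne, hrest⟩ := h
  refine ⟨v.swap, h0, hne, ?_⟩
  intro w hw
  exact hrest w.swap (fun hc => hw (by simpa using congrArg Prod.swap hc))

lemma sweep' (K L M : ℕ) (hK : 2 ≤ K) (hL : 2 ≤ L) (hM : 2 ≤ M)
    (σ : SiteP K L → ℕ) (hσ : IsWRP K L M σ) :
    ∃ (m : ℕ) (ω : List (SiteP K L → ℕ)), 1 ≤ m ∧ m ≤ M ∧
      IsPathP K L M ω σ (fun _ => m) ∧
      ∀ η ∈ ω, HP K L η ≤ HP K L σ + (2 * (L : ℤ) - 1) := by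
  obtain ⟨m, ω', hm1, hmM, ⟨hne, hhead, hlast, hWR, hchain⟩, hht⟩ :=
    sweep L K M hL hK hM (σ ∘ Prod.swap) ⟨fun v => hσ.1 _, fun v w hadj => hσ.2 _ _ (adj_swap hadj)⟩
  have hswap2 : ∀ η : SiteP K L → ℕ, (η ∘ Prod.swap) ∘ Prod.swap = η := by
    intro η; funext v; simp [Function.comp]
  refine ⟨m, ω'.map (· ∘ Prod.swap), hm1, hmM, ⟨?_, ?_, ?_, ?_, ?_⟩, ?_⟩
  · simpa using hne
  · rw [List.head?_map, hhead, Option.map_some]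
    rw [hswap2]
  · rw [List.getLast?_map, hlast, Option.map_some]
    rfl
  · intro η hη
    obtain ⟨η'', hmem, rfl⟩ := List.mem_map.1 hη
    exact isWR_swap (hWR η'' hmem)
  · show List.IsChain _ _
    rw [List.isChain_map]
    refine List.IsChain.imp ?_ hchain
    intro a b hab
    rcases hab with h | h
    · exact Or.inl (by rw [h])
    · exact Or.inr (upd_swap h)
  · intro η hη
    obtain ⟨η'', hmem, rfl⟩ := List.mem_map.1 hη
    have h1 := hht η'' hmem
    rw [HP_swap η'', HP_swap (σ ∘ Prod.swap), hswap2] at h1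
    exact h1

/-! ### from a path to the communication-height bound -/

lemma HP_nonpos (K L : ℕ) (σ : SiteP K L → ℕ) : HP K L σ ≤ 0 := by
  unfold HP
  simp

lemma height_ge {K L M : ℕ} {σ σ'' : SiteP K L → ℕ} {ω : List (SiteP K L → ℕ)}
    (hp : IsPathP K L M ω σ σ'') : HP K L σ ≤ heightP K L ω := by
  obtain ⟨hne, hhead, -, -, -⟩ := hp
  have hmem : σ ∈ ω := by
    cases ω with
    | nil => exact absurd rfl hne
    | cons a l =>
      simp only [List.head?_cons, Option.some_inj] at hhead
      rw [← hhead]; exact List.mem_cons_self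
  have hfin : {h : ℤ | ∃ η ∈ ω, HP K L η = h}.Finite := by
    have : {h : ℤ | ∃ η ∈ ω, HP K L η = h} = (HP K L) '' {η | η ∈ ω} := by
      ext h; simp [Set.mem_image]
    rw [this]
    exact Set.Finite.image _ (ω.finite_toSet)
  exact le_csSup hfin.bddAbove ⟨σ, hmem, rfl⟩

lemma commSet_le_of_path {K L M : ℕ} {σ : SiteP K L → ℕ} {m : ℕ} {ω : List (SiteP K L → ℕ)}
    {c : ℤ} (hm1 : 1 ≤ m) (hmM : m ≤ M) (hp : IsPathP K L M ω σ (fun _ => m))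
    (hh : ∀ η ∈ ω, HP K L η ≤ c) :
    commSetP K L M σ (stableP K L M) ≤ c := by
  have hσmem : σ ∈ ω := by
    obtain ⟨hne, hhead, -, -, -⟩ := hp
    cases ω with
    | nil => exact absurd rfl hne
    | cons a l =>
      simp only [List.head?_cons, Option.some_inj] at hhead
      rw [← hhead]; exact List.mem_cons_self
  have hheight : heightP K L ω ≤ c :=
    csSup_le ⟨HP K L σ, σ, hσmem, rfl⟩ (by rintro b ⟨η, hη, rfl⟩; exact hh η hη)
  have hcommP : commP K L M σ (fun _ => m) ≤ heightP K L ω := by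
    apply csInf_le
    · refine ⟨HP K L σ, ?_⟩
      rintro h ⟨ω', hp', rfl⟩
      exact height_ge hp'
    · exact ⟨ω, hp, rfl⟩
  have hlow : ∀ σ'' : SiteP K L → ℕ, HP K L σ ≤ commP K L M σ σ'' := by
    intro σ''
    unfold commP
    rcases Set.eq_empty_or_nonempty {h : ℤ | ∃ ω', IsPathP K L M ω' σ σ'' ∧ heightP K L ω' = h}
      with he | hne
    · rw [he, Int.csInf_empty]
      exact HP_nonpos K L σ
    · exact le_csInf hne (by rintro b ⟨ω', hp', rfl⟩; exact height_ge hp')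
  have hcs : commSetP K L M σ (stableP K L M) ≤ commP K L M σ (fun _ => m) := by
    apply csInf_le
    · refine ⟨HP K L σ, ?_⟩
      rintro h ⟨σ'', -, rfl⟩
      exact hlow σ''
    · exact ⟨fun _ => m, ⟨m, hm1, hmM, rfl⟩, rfl⟩
  linarith

end WRaux


/-- On the periodic `K × L` lattice, every non-stable WR configuration `σ`
satisfies `Φ(σ, X^s) - H(σ) < Γ(Λ)`. -/
theorem shallow_cycles_periodic (K L M : ℕ)
    (hK : 2 ≤ K) (hL : 2 ≤ L) (hM : 2 ≤ M) (hKL : 6 ≤ K + L)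
    (σ : SiteP K L → ℕ) (hσ : IsWRP K L M σ) (hns : σ ∉ stableP K L M) :
    commSetP K L M σ (stableP K L M) - HP K L σ < GammaP K L := by
  have hmain : commSetP K L M σ (stableP K L M) ≤ HP K L σ + (2 * (min K L : ℤ) - 1) := by
    rcases le_total K L with h | h
    · obtain ⟨m, ω, hm1, hmM, hp, hh⟩ := WRaux.sweep K L M hK hL hM σ hσ
      have := WRaux.commSet_le_of_path hm1 hmM hp hh
      have hmin : (min K L : ℤ) = K := min_eq_left (by exact_mod_cast h)
      linarith [this, hmin]
    · obtain ⟨m, ω, hm1, hmM, hp, hh⟩ := WRaux.sweep' K L M hK hL hM σ hσ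
      have := WRaux.commSet_le_of_path hm1 hmM hp hh
      have hmin : (min K L : ℤ) = L := min_eq_right (by exact_mod_cast h)
      linarith [this, hmin]
  have hG : (2 * (min K L : ℤ) - 1) < GammaP K L := by
    unfold GammaP
    split_ifs with hKL'
    · subst hKL'
      simp only [min_self]
      omega
    · have : (min (2 * K) (2 * L)) = 2 * min K L := by omega
      rw [this]
      push_cast
      omega
  omega
end

section
/- Consider the Widom–Rowlinson model with M ≥ 2 particle types on the K×L square lattice Λ with open boundary conditions. Then for every pair of distinct stable configurations s, s' ∈ X^s, the communication height satisfies Φ(s,s') − H(s) ≥ min{K,L} + 1. -/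
/-- Sites of the `K × L` square lattice with open boundary conditions:
`(j, i)` lies in column `c_j` and row `r_i`. -/
abbrev SiteO (K L : ℕ) := Fin L × Fin K

/-- Adjacency on the open lattice: the two sites agree in one coordinate and
differ by exactly `1` in the other (no wrap-around). -/
def adjO (K L : ℕ) (v w : SiteO K L) : Prop :=
  (v.2 = w.2 ∧ ((v.1 : ℕ) + 1 = (w.1 : ℕ) ∨ (w.1 : ℕ) + 1 = (v.1 : ℕ))) ∨
  (v.1 = w.1 ∧ ((v.2 : ℕ) + 1 = (w.2 : ℕ) ∨ (w.2 : ℕ) + 1 = (v.2 : ℕ)))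

/-- Widom–Rowlinson configurations with `M` particle types on the open lattice. -/
def IsWRO (K L M : ℕ) (σ : SiteO K L → ℕ) : Prop :=
  (∀ v, σ v ≤ M) ∧ ∀ v w, adjO K L v w → σ v = 0 ∨ σ w = 0 ∨ σ v = σ w

/-- The energy `H(σ) = -#{v : σ v ≠ 0}`. -/
noncomputable def HO (K L : ℕ) (σ : SiteO K L → ℕ) : ℤ :=
  -(Nat.card {v : SiteO K L // σ v ≠ 0} : ℤ)

/-- `σ` and `σ'` are related by a single-site update: they differ at exactly
one site `v`, and moreover `σ v = 0` or `σ' v = 0`. -/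
def UpdO (K L : ℕ) (σ σ' : SiteO K L → ℕ) : Prop :=
  ∃ v, (σ v = 0 ∨ σ' v = 0) ∧ σ v ≠ σ' v ∧ ∀ w, w ≠ v → σ w = σ' w

/-- A path `ω : σ → σ'`: a finite nonempty sequence of WR configurations from
`σ` to `σ'` whose consecutive configurations coincide or are related by a
single-site update. -/
def IsPathO (K L M : ℕ) (ω : List (SiteO K L → ℕ)) (σ σ' : SiteO K L → ℕ) : Prop :=
  ω ≠ [] ∧ ω.head? = some σ ∧ ω.getLast? = some σ' ∧
    (∀ η ∈ ω, IsWRO K L M η) ∧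
    ω.Chain' (fun η η' => η = η' ∨ UpdO K L η η')

/-- The height `Φ_ω` of a path: the maximum energy along it. -/
noncomputable def heightO (K L : ℕ) (ω : List (SiteO K L → ℕ)) : ℤ :=
  sSup {h : ℤ | ∃ η ∈ ω, HO K L η = h}

/-- The communication height `Φ(σ,σ')`: the minimal height over all paths
`ω : σ → σ'`. -/
noncomputable def commO (K L M : ℕ) (σ σ' : SiteO K L → ℕ) : ℤ :=
  sInf {h : ℤ | ∃ ω, IsPathO K L M ω σ σ' ∧ heightO K L ω = h}

/-- The set `X^s = {s^(1),…,s^(M)}` of stable configurations. -/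
def stableO (K L M : ℕ) : Set (SiteO K L → ℕ) :=
  {σ | ∃ m : ℕ, 1 ≤ m ∧ m ≤ M ∧ σ = fun _ => m}

namespace WRaux

variable {K L M : ℕ}

/-- number of empty (zero) sites -/
def Zc (K L : ℕ) (σ : SiteO K L → ℕ) : ℕ :=
  (Finset.univ.filter (fun v => σ v = 0)).card

lemma row_eq {σ : SiteO K L → ℕ} (hσ : IsWRO K L M σ) (i : Fin K)
    (hfull : ∀ j, σ (j, i) ≠ 0) (j j' : Fin L) : σ (j, i) = σ (j', i) := by
  have hL0 : 0 < L := j.pos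
  have key : ∀ a : ℕ, (h : a < L) → σ (⟨a, h⟩, i) = σ (⟨0, hL0⟩, i) := by
    intro a
    induction a with
    | zero => intro h; rfl
    | succ b ih =>
      intro h
      have hb : b < L := by omega
      have hadj : adjO K L ((⟨b, hb⟩ : Fin L), i) ((⟨b + 1, h⟩ : Fin L), i) :=
        Or.inl ⟨rfl, Or.inl rfl⟩
      rcases hσ.2 _ _ hadj with h0 | h0 | h0
      · exact absurd h0 (hfull _)
      · exact absurd h0 (hfull _)
      · exact h0.symm.trans (ih hb)
  have h1 := key j.1 j.2
  have h2 := key j'.1 j'.2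
  simp only [Fin.eta] at h1 h2
  rw [h1, h2]

lemma col_eq {σ : SiteO K L → ℕ} (hσ : IsWRO K L M σ) (j : Fin L)
    (hfull : ∀ i, σ (j, i) ≠ 0) (i i' : Fin K) : σ (j, i) = σ (j, i') := by
  have hK0 : 0 < K := i.pos
  have key : ∀ a : ℕ, (h : a < K) → σ (j, ⟨a, h⟩) = σ (j, ⟨0, hK0⟩) := by
    intro a
    induction a with
    | zero => intro h; rfl
    | succ b ih =>
      intro h
      have hb : b < K := by omega
      have hadj : adjO K L (j, (⟨b, hb⟩ : Fin K)) (j, (⟨b + 1, h⟩ : Fin K)) :=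
        Or.inr ⟨rfl, Or.inl rfl⟩
      rcases hσ.2 _ _ hadj with h0 | h0 | h0
      · exact absurd h0 (hfull _)
      · exact absurd h0 (hfull _)
      · exact h0.symm.trans (ih hb)
  have h1 := key i.1 i.2
  have h2 := key i'.1 i'.2
  simp only [Fin.eta] at h1 h2
  rw [h1, h2]

lemma exists_full_row {σ : SiteO K L → ℕ} (h : Zc K L σ < K) :
    ∃ i : Fin K, ∀ j, σ (j, i) ≠ 0 := by
  by_contra hc
  push_neg at hc
  choose f hf using hc
  have hinj : (Finset.univ : Finset (Fin K)).card ≤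
      (Finset.univ.filter (fun v : SiteO K L => σ v = 0)).card := by
    apply Finset.card_le_card_of_injOn (fun i => (f i, i))
    · intro i _
      simp [Finset.mem_filter, hf i]
    · intro i _ i' _ hEq
      exact congrArg Prod.snd hEq
  simp only [Finset.card_univ, Fintype.card_fin] at hinj
  have : Zc K L σ = (Finset.univ.filter (fun v : SiteO K L => σ v = 0)).card := rfl
  omega

lemma exists_full_col {σ : SiteO K L → ℕ} (h : Zc K L σ < L) :
    ∃ j : Fin L, ∀ i, σ (j, i) ≠ 0 := by
  by_contra hc
  push_neg at hc
  choose f hf using hc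
  have hinj : (Finset.univ : Finset (Fin L)).card ≤
      (Finset.univ.filter (fun v : SiteO K L => σ v = 0)).card := by
    apply Finset.card_le_card_of_injOn (fun j => (j, f j))
    · intro j _
      simp [Finset.mem_filter, hf j]
    · intro j _ j' _ hEq
      exact congrArg Prod.fst hEq
  simp only [Finset.card_univ, Fintype.card_fin] at hinj
  have : Zc K L σ = (Finset.univ.filter (fun v : SiteO K L => σ v = 0)).card := rfl
  omega

lemma upd_cases {σ σ' : SiteO K L → ℕ} (h : UpdO K L σ σ') :
    ∃ v, (∀ w, w ≠ v → σ w = σ' w) ∧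
      ((σ v = 0 ∧ σ' v ≠ 0 ∧ Zc K L σ = Zc K L σ' + 1) ∨
       (σ' v = 0 ∧ σ v ≠ 0 ∧ Zc K L σ' = Zc K L σ + 1)) := by
  obtain ⟨v, hv0, hvne, hoff⟩ := h
  refine ⟨v, hoff, ?_⟩
  rcases hv0 with h0 | h0
  · left
    have h0' : σ' v ≠ 0 := fun hh => hvne (h0.trans hh.symm)
    refine ⟨h0, h0', ?_⟩
    have hset : (Finset.univ.filter (fun w : SiteO K L => σ' w = 0)) =
        (Finset.univ.filter (fun w : SiteO K L => σ w = 0)).erase v := by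
      ext x
      simp only [Finset.mem_filter, Finset.mem_erase, Finset.mem_univ, true_and]
      by_cases hx : x = v
      · subst hx; simp [h0', h0]
      · rw [hoff x hx]; tauto
    have hmem : v ∈ Finset.univ.filter (fun w : SiteO K L => σ w = 0) := by
      simp [h0]
    have hcard := Finset.card_erase_of_mem hmem
    have hpos : 1 ≤ (Finset.univ.filter (fun w : SiteO K L => σ w = 0)).card :=
      Finset.card_pos.2 ⟨v, hmem⟩
    have hz : Zc K L σ' = (Finset.univ.filter (fun w : SiteO K L => σ' w = 0)).card := rfl
    have hz2 : Zc K L σ = (Finset.univ.filter (fun w : SiteO K L => σ w = 0)).card := rfl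
    rw [hz, hz2, hset, hcard]
    omega
  · right
    have h0' : σ v ≠ 0 := fun hh => hvne (hh.trans h0.symm)
    refine ⟨h0, h0', ?_⟩
    have hset : (Finset.univ.filter (fun w : SiteO K L => σ w = 0)) =
        (Finset.univ.filter (fun w : SiteO K L => σ' w = 0)).erase v := by
      ext x
      simp only [Finset.mem_filter, Finset.mem_erase, Finset.mem_univ, true_and]
      by_cases hx : x = v
      · subst hx; simp [h0', h0]
      · rw [hoff x hx]; tauto
    have hmem : v ∈ Finset.univ.filter (fun w : SiteO K L => σ' w = 0) := by
      simp [h0]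
    have hcard := Finset.card_erase_of_mem hmem
    have hpos : 1 ≤ (Finset.univ.filter (fun w : SiteO K L => σ' w = 0)).card :=
      Finset.card_pos.2 ⟨v, hmem⟩
    have hz : Zc K L σ' = (Finset.univ.filter (fun w : SiteO K L => σ' w = 0)).card := rfl
    have hz2 : Zc K L σ = (Finset.univ.filter (fun w : SiteO K L => σ w = 0)).card := rfl
    rw [hz, hz2, hset, hcard]
    omega


/-- a full row with one entry equal to `m` is constantly `m`. -/
lemma row_of_entry {σ : SiteO K L → ℕ} (hσ : IsWRO K L M σ) (i : Fin K)
    (hfull : ∀ j, σ (j, i) ≠ 0) {j₀ : Fin L} {m : ℕ} (h : σ (j₀, i) = m) :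
    ∀ j, σ (j, i) = m := fun j => (row_eq hσ i hfull j j₀).trans h

/-- One-step color preservation below level `min K L`. -/
lemma step_color (hK : 2 ≤ K) (hL : 2 ≤ L) {σ σ' : SiteO K L → ℕ} {m : ℕ}
    (hσ : IsWRO K L M σ) (hσ' : IsWRO K L M σ') (hupd : UpdO K L σ σ')
    (hZ : Zc K L σ < min K L) (hZ' : Zc K L σ' < min K L)
    (hm : m ≠ 0) (hg : ∃ r : Fin K, ∀ j, σ (j, r) = m) :
    ∃ r : Fin K, ∀ j, σ' (j, r) = m := by
  obtain ⟨v, hv0, hvne, hoff⟩ := hupd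
  obtain ⟨i₁, hfull⟩ := exists_full_row (σ := σ') (lt_of_lt_of_le hZ' (min_le_left K L))
  obtain ⟨r, hr⟩ := hg
  have hLcard : 1 < Fintype.card (Fin L) := by simp; omega
  by_cases hir : i₁ = r
  · subst hir
    obtain ⟨j, hj⟩ := Fintype.exists_ne_of_one_lt_card hLcard v.1
    have hxv : ((j, i₁) : SiteO K L) ≠ v := fun hh => hj (congrArg Prod.fst hh)
    have hx : σ' (j, i₁) = m := (hoff _ hxv).symm.trans (hr j)
    exact ⟨i₁, row_of_entry hσ' i₁ hfull hx⟩
  · obtain ⟨q, hq⟩ := exists_full_col (σ := σ) (lt_of_lt_of_le hZ (min_le_right K L))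
    have hqm : ∀ i, σ (q, i) = m := fun i => (col_eq hσ q hq i r).trans (hr q)
    by_cases hxv : ((q, i₁) : SiteO K L) = v
    · exfalso
      have hσv : σ v ≠ 0 := by rw [← hxv, hqm i₁]; exact hm
      rcases hv0 with h0 | h0
      · exact hσv h0
      · exact hfull q (by rw [hxv]; exact h0)
    · have hx : σ' (q, i₁) = m := (hoff _ hxv).symm.trans (hqm i₁)
      exact ⟨i₁, row_of_entry hσ' i₁ hfull hx⟩

/-- Two-step color preservation through level `min K L`. -/
lemma jump_color (hK : 2 ≤ K) (hL : 2 ≤ L) {σ σ' σ'' : SiteO K L → ℕ} {m : ℕ}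
    (hσ : IsWRO K L M σ) (hσ'' : IsWRO K L M σ'')
    (h1 : UpdO K L σ σ') (h2 : UpdO K L σ' σ'')
    (hZ : Zc K L σ < min K L) (hZ1 : Zc K L σ < Zc K L σ')
    (hZ2 : Zc K L σ'' < Zc K L σ') (hZ'' : Zc K L σ'' < min K L)
    (hm : m ≠ 0) (hg : ∃ r : Fin K, ∀ j, σ (j, r) = m) :
    ∃ r : Fin K, ∀ j, σ'' (j, r) = m := by
  obtain ⟨v, hoff1, hc1⟩ := upd_cases h1
  have hv : σ' v = 0 ∧ σ v ≠ 0 := by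
    rcases hc1 with ⟨_, _, hcard⟩ | ⟨a, b, _⟩
    · omega
    · exact ⟨a, b⟩
  obtain ⟨w, hoff2, hc2⟩ := upd_cases h2
  have hw : σ' w = 0 ∧ σ'' w ≠ 0 := by
    rcases hc2 with ⟨a, b, _⟩ | ⟨_, _, hcard⟩
    · exact ⟨a, b⟩
    · omega
  -- σ'' agrees with σ away from v and w
  have hagree : ∀ x : SiteO K L, x ≠ v → x ≠ w → σ x = σ'' x :=
    fun x hxv hxw => (hoff1 x hxv).trans (hoff2 x hxw)
  have hηw : w ≠ v → σ w = 0 := fun hwv => (hoff1 w hwv).trans hw.1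
  obtain ⟨i₁, hfull⟩ := exists_full_row (σ := σ'') (lt_of_lt_of_le hZ'' (min_le_left K L))
  obtain ⟨r, hr⟩ := hg
  have hLcard : 1 < Fintype.card (Fin L) := by simp; omega
  by_cases hir : i₁ = r
  · subst hir
    obtain ⟨j, hj⟩ := Fintype.exists_ne_of_one_lt_card hLcard v.1
    have hxv : ((j, i₁) : SiteO K L) ≠ v := fun hh => hj (congrArg Prod.fst hh)
    have hxw : ((j, i₁) : SiteO K L) ≠ w := by
      intro hh
      by_cases hwv : w = v
      · exact hxv (hh.trans hwv)
      · refine hm ?_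
        rw [← hr j, hh]
        exact hηw hwv
    have hx : σ'' (j, i₁) = m := (hagree _ hxv hxw).symm.trans (hr j)
    exact ⟨i₁, row_of_entry hσ'' i₁ hfull hx⟩
  · obtain ⟨q, hq⟩ := exists_full_col (σ := σ) (lt_of_lt_of_le hZ (min_le_right K L))
    have hqm : ∀ i, σ (q, i) = m := fun i => (col_eq hσ q hq i r).trans (hr q)
    by_cases hxv : ((q, i₁) : SiteO K L) = v
    · -- x = v; must have w = v, and then row i₁ is full in σ with color m
      by_cases hwv : w = v
      · have hσfull : ∀ j, σ (j, i₁) ≠ 0 := by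
          intro j
          by_cases hjv : ((j, i₁) : SiteO K L) = v
          · rw [hjv]; exact hv.2
          · have hjw : ((j, i₁) : SiteO K L) ≠ w := fun hh => hjv (hh.trans hwv)
            rw [hagree _ hjv hjw]
            exact hfull j
        have hrow : ∀ j, σ (j, i₁) = m :=
          row_of_entry hσ i₁ hσfull (hqm i₁)
        obtain ⟨j, hj⟩ := Fintype.exists_ne_of_one_lt_card hLcard q
        have hjv : ((j, i₁) : SiteO K L) ≠ v := fun hh =>
          hj (congrArg Prod.fst (hh.trans hxv.symm))
        have hjw : ((j, i₁) : SiteO K L) ≠ w := fun hh => hjv (hh.trans hwv)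
        have hx : σ'' (j, i₁) = m := (hagree _ hjv hjw).symm.trans (hrow j)
        exact ⟨i₁, row_of_entry hσ'' i₁ hfull hx⟩
      · exfalso
        have hxw : ((q, i₁) : SiteO K L) ≠ w := fun hh => hwv (hh.symm.trans hxv)
        have : σ'' (q, i₁) = 0 := by
          rw [← hoff2 _ hxw, hxv]
          exact hv.1
        exact hfull q this
    · by_cases hxw : ((q, i₁) : SiteO K L) = w
      · exfalso
        by_cases hwv : w = v
        · exact hxv (hxw.trans hwv)
        · refine hm ?_
          rw [← hqm i₁, hxw]
          exact hηw hwv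
      · have hx : σ'' (q, i₁) = m := (hagree _ hxv hxw).symm.trans (hqm i₁)
        exact ⟨i₁, row_of_entry hσ'' i₁ hfull hx⟩


/-- The color invariant carried along the path. -/
def Inv (K L M m : ℕ) (σ : SiteO K L → ℕ) : Prop :=
  (Zc K L σ < min K L → ∃ r : Fin K, ∀ j, σ (j, r) = m) ∧
  (Zc K L σ = min K L → ∀ σ'', IsWRO K L M σ'' → UpdO K L σ σ'' →
     Zc K L σ'' < min K L → ∃ r : Fin K, ∀ j, σ'' (j, r) = m)

lemma transfer (hK : 2 ≤ K) (hL : 2 ≤ L) {m : ℕ} (hm : m ≠ 0)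
    {a b : SiteO K L → ℕ} (ha : IsWRO K L M a) (hb : IsWRO K L M b)
    (hZa : Zc K L a ≤ min K L) (hZb : Zc K L b ≤ min K L)
    (hR : a = b ∨ UpdO K L a b) (hInv : Inv K L M m a) : Inv K L M m b := by
  rcases hR with rfl | hU
  · exact hInv
  have hpm : Zc K L a = Zc K L b + 1 ∨ Zc K L b = Zc K L a + 1 := by
    obtain ⟨v, hoff, hc⟩ := upd_cases hU
    rcases hc with ⟨_, _, h⟩ | ⟨_, _, h⟩
    · exact Or.inl h
    · exact Or.inr h
  have hn2 : 2 ≤ min K L := le_min hK hL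
  by_cases hbn : Zc K L b < min K L
  · constructor
    · intro _
      by_cases han : Zc K L a < min K L
      · exact step_color hK hL ha hb hU han hbn hm (hInv.1 han)
      · have han' : Zc K L a = min K L := by omega
        exact hInv.2 han' b hb hU hbn
    · intro h; omega
  · have hbn' : Zc K L b = min K L := by omega
    have han : Zc K L a < min K L := by omega
    constructor
    · intro h; omega
    · intro _ σ'' hWR hU2 hZ''
      exact jump_color hK hL ha hWR hU hU2 han (by omega) (by omega) hZ'' hm (hInv.1 han)

/-- Generic propagation of an invariant along a `Chain'`. -/
lemma chain_inv {α : Type*} {R : α → α → Prop} {P Q : α → Prop}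
    (step : ∀ a b, P a → P b → R a b → Q a → Q b) :
    ∀ l : List α, l.Chain' R → (∀ x ∈ l, P x) → ∀ a, l.head? = some a → Q a →
      ∀ x ∈ l, Q x := by
  intro l
  induction l with
  | nil => intro _ _ a ha; simp at ha
  | cons b t ih =>
    intro hch hP a ha hQ x hx
    rw [List.head?_cons, Option.some_inj] at ha
    subst ha
    cases t with
    | nil =>
      rcases List.mem_singleton.1 hx with rfl
      exact hQ
    | cons c t' =>
      replace hch := List.isChain_cons_cons.1 hch
      rcases List.mem_cons.1 hx with rfl | hx'
      · exact hQ
      · refine ih hch.2 (fun y hy => hP y (List.mem_cons_of_mem _ hy)) c rfl ?_ x hx'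
        exact step b c (hP b (by simp)) (hP c (by simp)) hch.1 hQ


lemma Zc_const {m : ℕ} (hm : m ≠ 0) : Zc K L (fun _ : SiteO K L => m) = 0 := by
  unfold Zc
  rw [Finset.card_eq_zero]
  exact Finset.filter_eq_empty_iff.2 (fun x _ => hm)

/-- Any path between distinct monochromatic configurations passes through a
configuration with at least `min K L + 1` empty sites. -/
lemma key_path (hK : 2 ≤ K) (hL : 2 ≤ L) {m m' : ℕ} (hm : m ≠ 0) (hm' : m' ≠ 0)
    (hmm : m ≠ m') {ω : List (SiteO K L → ℕ)}
    (hω : ω ≠ [] ∧ ω.head? = some (fun _ => m) ∧ ω.getLast? = some (fun _ => m') ∧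
      (∀ η ∈ ω, IsWRO K L M η) ∧ ω.Chain' (fun η η' => η = η' ∨ UpdO K L η η')) :
    ∃ η ∈ ω, min K L + 1 ≤ Zc K L η := by
  by_contra hc
  push_neg at hc
  obtain ⟨hne, hhead, hlast, hWR, hch⟩ := hω
  have hn2 : 2 ≤ min K L := le_min hK hL
  have hP : ∀ x ∈ ω, IsWRO K L M x ∧ Zc K L x ≤ min K L := by
    intro x hx
    have := hc x hx
    exact ⟨hWR x hx, by omega⟩
  have hInv0 : Inv K L M m (fun _ => m) := by
    constructor
    · intro _
      exact ⟨⟨0, by omega⟩, fun j => rfl⟩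
    · intro h
      rw [Zc_const hm] at h
      omega
  have hall := chain_inv
    (fun a b pa pb r q => transfer hK hL hm pa.1 pb.1 pa.2 pb.2 r q)
    ω hch hP _ hhead hInv0
  have hmem' : (fun _ : SiteO K L => m') ∈ ω := by
    obtain ⟨h, heq⟩ := List.mem_getLast?_eq_getLast (Option.mem_def.2 hlast)
    rw [heq]
    exact List.getLast_mem h
  have hInv' := hall _ hmem'
  have hZ' : Zc K L (fun _ : SiteO K L => m') < min K L := by
    rw [Zc_const hm']
    omega
  obtain ⟨r, hr⟩ := hInv'.1 hZ'
  exact hmm ((hr ⟨0, by omega⟩).symm)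


lemma HO_eq (σ : SiteO K L → ℕ) :
    HO K L σ = -(((Finset.univ.filter (fun v : SiteO K L => σ v ≠ 0)).card : ℤ)) := by
  unfold HO
  congr 2
  rw [Nat.card_eq_fintype_card, Fintype.card_subtype]

lemma card_split (σ : SiteO K L → ℕ) :
    (Finset.univ.filter (fun v : SiteO K L => σ v ≠ 0)).card + Zc K L σ = L * K := by
  have h := Finset.card_filter_add_card_filter_not
    (s := (Finset.univ : Finset (SiteO K L))) (p := fun v => σ v ≠ 0)
  simp only [not_not] at h
  have hcard : (Finset.univ : Finset (SiteO K L)).card = L * K := by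
    simp [Finset.card_univ]
  rw [hcard] at h
  exact h

lemma height_ge_s12 {ω : List (SiteO K L → ℕ)} {η : SiteO K L → ℕ} (hmem : η ∈ ω) :
    HO K L η ≤ heightO K L ω := by
  have hbdd : BddAbove {h : ℤ | ∃ η ∈ ω, HO K L η = h} := by
    have heq : {h : ℤ | ∃ η ∈ ω, HO K L η = h} = (HO K L) '' {x | x ∈ ω} := rfl
    rw [heq]
    exact ((List.finite_toSet ω).image _).bddAbove
  exact le_csSup hbdd ⟨η, hmem, rfl⟩

end WRaux

/-- Lower bound on the communication height between distinct stable
configurations of the Widom–Rowlinson model on the open `K × L` lattice: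
`Φ(s,s') - H(s) ≥ min{K,L} + 1`. -/
theorem comm_height_lower_bound_open (K L M : ℕ)
    (hK : 2 ≤ K) (hL : 2 ≤ L) (hM : 2 ≤ M)
    (s s' : SiteO K L → ℕ) (hs : s ∈ stableO K L M) (hs' : s' ∈ stableO K L M)
    (hne : s ≠ s') :
    ((min K L : ℕ) : ℤ) + 1 ≤ commO K L M s s' - HO K L s := by
  classical
  obtain ⟨m, hm1, hmM, rfl⟩ := hs
  obtain ⟨m', hm1', hmM', rfl⟩ := hs'
  have hmm : m ≠ m' := fun h => hne (by rw [h])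
  have hm0 : m ≠ 0 := by omega
  have hm0' : m' ≠ 0 := by omega
  have hminK : min K L ≤ K := min_le_left K L
  have hLK : 2 * K ≤ L * K := Nat.mul_le_mul_right K hL
  -- energy of the starting configuration
  have hHs : HO K L (fun _ : SiteO K L => m) = -((L * K : ℕ) : ℤ) := by
    rw [WRaux.HO_eq]
    have h1 := WRaux.card_split (K := K) (L := L) (fun _ : SiteO K L => m)
    rw [WRaux.Zc_const hm0] at h1
    rw [Nat.add_zero] at h1
    rw [h1]
  rw [hHs]
  have hbound : ∀ b ∈ {h : ℤ | ∃ ω, IsPathO K L M ω (fun _ : SiteO K L => m)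
      (fun _ : SiteO K L => m') ∧ heightO K L ω = h},
      ((min K L : ℕ) : ℤ) + 1 - ((L * K : ℕ) : ℤ) ≤ b := by
    rintro b ⟨ω, hω, rfl⟩
    obtain ⟨η, hmem, hZ⟩ := WRaux.key_path hK hL hm0 hm0' hmm hω
    have hHη : ((min K L : ℕ) : ℤ) + 1 - ((L * K : ℕ) : ℤ) ≤ HO K L η := by
      rw [WRaux.HO_eq]
      have h1 := WRaux.card_split (K := K) (L := L) η
      have h1' : (((Finset.univ.filter (fun v : SiteO K L => η v ≠ 0)).card : ℤ))
          + ((WRaux.Zc K L η : ℕ) : ℤ) = ((L * K : ℕ) : ℤ) := by exact_mod_cast h1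
      have h2 : ((min K L : ℕ) : ℤ) + 1 ≤ ((WRaux.Zc K L η : ℕ) : ℤ) := by
        exact_mod_cast hZ
      linarith
    have h3 := WRaux.height_ge_s12 (K := K) (L := L) hmem
    linarith
  rcases Set.eq_empty_or_nonempty {h : ℤ | ∃ ω, IsPathO K L M ω
      (fun _ : SiteO K L => m) (fun _ : SiteO K L => m') ∧ heightO K L ω = h} with hemp | hne'
  · unfold commO
    rw [hemp, Int.csInf_empty]
    have c1 : ((min K L : ℕ) : ℤ) ≤ (K : ℤ) := by exact_mod_cast hminK
    have c2 : (2 * K : ℤ) ≤ ((L * K : ℕ) : ℤ) := by exact_mod_cast hLK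
    have c3 : (2 : ℤ) ≤ (K : ℤ) := by exact_mod_cast hK
    linarith
  · have := le_csInf hne' hbound
    unfold commO
    linarith
end

section
/- Consider the Widom–Rowlinson model with M ≥ 2 particle types on the K×L square lattice Λ with open boundary conditions. Then for every pair of distinct stable configurations s, s' ∈ X^s there exists a path ω* : s → s' in X such that Φ_{ω*} − H(s) = min{K,L} + 1. -/

def pA (D N n : ℕ) : ℕ := if n ≤ 2*N - D then (n - D)/2 else n - N
def pR (D N n : ℕ) : ℕ :=
  if n ≤ D then n else if n ≤ 2*N - D then D + (n - D + 1)/2 else N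

lemma pAR_inv (D N n : ℕ) (hD : 1 ≤ D) (hN : 2*D ≤ N) (hn : n ≤ 2*N) :
    pA D N n ≤ pR D N n ∧ pR D N n ≤ N ∧ pR D N n ≤ pA D N n + (D+1) ∧
      (pA D N n = 0 ∨ pA D N n + D ≤ pR D N n ∨ N ≤ pR D N n) := by
  unfold pA pR; split_ifs <;> omega

lemma pAR_step (D N n : ℕ) (hD : 1 ≤ D) (hN : 2*D ≤ N) (hn : n < 2*N) :
    (pA D N (n+1) = pA D N n ∧ pR D N (n+1) = pR D N n + 1 ∧
      pA D N n ≤ pR D N n ∧ pR D N n < N)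
  ∨ (pA D N (n+1) = pA D N n + 1 ∧ pR D N (n+1) = pR D N n ∧
      pA D N n < pR D N n ∧ pR D N n ≤ N) := by
  unfold pA pR; split_ifs <;> omega

lemma pAR_peak (D N : ℕ) (hD : 1 ≤ D) (hN : 2*D ≤ N) :
    pA D N (D+1) = 0 ∧ pR D N (D+1) = D + 1 := by
  unfold pA pR; split_ifs <;> omega

lemma pAR_zero (D N : ℕ) (hD : 1 ≤ D) (hN : 2*D ≤ N) :
    pA D N 0 = 0 ∧ pR D N 0 = 0 := by
  unfold pA pR; split_ifs <;> omega

lemma pAR_last (D N : ℕ) (hD : 1 ≤ D) (hN : 2*D ≤ N) :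
    pA D N (2*N) = N ∧ pR D N (2*N) = N := by
  unfold pA pR; split_ifs <;> omega

lemma adjO_symm' {K L : ℕ} {v w : SiteO K L} (h : adjO K L v w) : adjO K L w v := by
  rcases h with ⟨h1, h2⟩ | ⟨h1, h2⟩
  · exact Or.inl ⟨h1.symm, h2.symm⟩
  · exact Or.inr ⟨h1.symm, h2.symm⟩

def conf (K L N : ℕ) (e : SiteO K L ≃ Fin N) (m m' a r : ℕ) : SiteO K L → ℕ :=
  fun v => if (e v : ℕ) < a then m' else if (e v : ℕ) < r then 0 else m

variable {K L M N : ℕ} (e : SiteO K L ≃ Fin N) {m m' : ℕ}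

lemma icoCard (a r : ℕ) (hr : r ≤ N) :
    Nat.card {x : Fin N // a ≤ (x : ℕ) ∧ (x : ℕ) < r} = r - a := by
  have E : {x : Fin N // a ≤ (x : ℕ) ∧ (x : ℕ) < r} ≃ Fin (r - a) :=
    { toFun := fun x => ⟨(x : Fin N) - a, by have := x.2; omega⟩
      invFun := fun k => ⟨⟨a + k, by have := k.isLt; omega⟩, by
        have := k.isLt; constructor <;> simp <;> omega⟩
      left_inv := fun x => by ext; simp; have := x.2; omega
      right_inv := fun k => by ext; simp }
  rw [Nat.card_congr E, Nat.card_eq_fintype_card, Fintype.card_fin]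

lemma card_conf (a r : ℕ) (ha : a ≤ r) (hr : r ≤ N) (hm : m ≠ 0) (hm' : m' ≠ 0) :
    Nat.card {v : SiteO K L // conf K L N e m m' a r v ≠ 0} = N - (r - a) := by
  have h1 : ∀ v : SiteO K L,
      (conf K L N e m m' a r v ≠ 0) ↔ ¬ (a ≤ (e v : ℕ) ∧ (e v : ℕ) < r) := by
    intro v
    unfold conf
    split_ifs with h h'
    · simp only [ne_eq, hm', not_false_eq_true, true_iff]; omega
    · simp only [ne_eq, not_true_eq_false, false_iff, not_not]; omega
    · simp only [ne_eq, hm, not_false_eq_true, true_iff]; omega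
  have E : {v : SiteO K L // conf K L N e m m' a r v ≠ 0} ≃
      {x : Fin N // ¬ (a ≤ (x : ℕ) ∧ (x : ℕ) < r)} :=
    Equiv.subtypeEquiv e (fun v => by rw [h1 v])
  rw [Nat.card_congr E, Nat.card_eq_fintype_card, Fintype.card_subtype_compl,
    Fintype.card_fin, ← Nat.card_eq_fintype_card, icoCard a r hr]

lemma HO_conf (a r : ℕ) (ha : a ≤ r) (hr : r ≤ N) (hm : m ≠ 0) (hm' : m' ≠ 0) :
    HO K L (conf K L N e m m' a r) = (r : ℤ) - a - N := by
  unfold HO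
  rw [card_conf e a r ha hr hm hm']
  omega

variable {K L M N D : ℕ} (e : SiteO K L ≃ Fin N) {m m' : ℕ}

lemma wr_conf (hadj : ∀ v w : SiteO K L, adjO K L v w → (e v : ℕ) ≤ (e w : ℕ) + D)
    (hmM : m ≤ M) (hm'M : m' ≤ M) (a r : ℕ)
    (hcond : a = 0 ∨ a + D ≤ r ∨ N ≤ r) :
    IsWRO K L M (conf K L N e m m' a r) := by
  constructor
  · intro v; unfold conf; split_ifs <;> omega
  · intro v w hvw
    have h1 := hadj v w hvw
    have h2 := hadj w v (adjO_symm' hvw)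
    have h3 := (e v).isLt
    have h4 := (e w).isLt
    unfold conf
    split_ifs <;> first | (left; rfl) | (right; left; rfl) | (right; right; rfl) | omega

lemma upd_fill (a r : ℕ) (har : a < r) (hrN : r ≤ N) (hm' : m' ≠ 0) :
    UpdO K L (conf K L N e m m' a r) (conf K L N e m m' (a+1) r) := by
  obtain ⟨v, hv⟩ : ∃ v, (e v : ℕ) = a := ⟨e.symm ⟨a, by omega⟩, by simp⟩
  refine ⟨v, ?_, ?_, ?_⟩
  · left; simp only [conf, hv]
    rw [if_neg (lt_irrefl a), if_pos har]
  · simp only [conf, hv]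
    rw [if_neg (lt_irrefl a), if_pos har, if_pos (Nat.lt_succ_self a)]
    omega
  · intro w hw
    have hwv : (e w : ℕ) ≠ a := by
      intro h
      exact hw (e.injective (Fin.ext (h.trans hv.symm)))
    simp only [conf]
    split_ifs <;> omega

lemma upd_rm (a r : ℕ) (har : a ≤ r) (hrN : r < N) (hm : m ≠ 0) :
    UpdO K L (conf K L N e m m' a r) (conf K L N e m m' a (r+1)) := by
  obtain ⟨v, hv⟩ : ∃ v, (e v : ℕ) = r := ⟨e.symm ⟨r, hrN⟩, by simp⟩
  refine ⟨v, ?_, ?_, ?_⟩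
  · right; simp only [conf, hv]
    rw [if_neg (by omega : ¬ r < a), if_pos (Nat.lt_succ_self r)]
  · simp only [conf, hv]
    rw [if_neg (by omega : ¬ r < a), if_neg (lt_irrefl r),
      if_neg (by omega : ¬ r < a), if_pos (Nat.lt_succ_self r)]
    omega
  · intro w hw
    have hwv : (e w : ℕ) ≠ r := by
      intro h
      exact hw (e.injective (Fin.ext (h.trans hv.symm)))
    simp only [conf]
    split_ifs <;> omega

lemma conf_zero : conf K L N e m m' 0 0 = fun _ => m := by
  funext v; simp [conf]

lemma conf_last : conf K L N e m m' N N = fun _ => m' := by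
  funext v; simp [conf, (e v).isLt]

lemma main_aux (K L M N D : ℕ) (e : SiteO K L ≃ Fin N) (m m' : ℕ)
    (hD : 1 ≤ D) (hN : 2*D ≤ N)
    (hadj : ∀ v w : SiteO K L, adjO K L v w → (e v : ℕ) ≤ (e w : ℕ) + D)
    (hm : 1 ≤ m) (hm' : 1 ≤ m') (hmM : m ≤ M) (hm'M : m' ≤ M) :
    ∃ ω : List (SiteO K L → ℕ),
      IsPathO K L M ω (fun _ => m) (fun _ => m') ∧
        heightO K L ω - HO K L (fun _ => m) = (D : ℤ) + 1 := by
  have hm0 : m ≠ 0 := by omega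
  have hm'0 : m' ≠ 0 := by omega
  set g : ℕ → SiteO K L → ℕ :=
    fun n => conf K L N e m m' (pA D N n) (pR D N n) with hg
  refine ⟨(List.range (2*N+1)).map g, ⟨?_, ?_, ?_, ?_, ?_⟩, ?_⟩
  · simp
  · rw [List.head?_eq_getElem?, List.getElem?_map, List.getElem?_range (by omega)]
    simp only [Option.map_some]
    have h0 := pAR_zero D N hD hN
    rw [hg]
    simp only
    rw [h0.1, h0.2, conf_zero]
  · rw [List.getLast?_eq_getElem?, List.length_map, List.length_range]
    rw [List.getElem?_map, List.getElem?_range (by omega)]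
    simp only [Option.map_some]
    have h0 := pAR_last D N hD hN
    rw [hg]
    simp only [Nat.add_sub_cancel]
    rw [h0.1, h0.2, conf_last]
  · intro η hη
    rcases List.mem_map.1 hη with ⟨n, hn, rfl⟩
    rw [List.mem_range] at hn
    have hinv := pAR_inv D N n hD hN (by omega)
    exact wr_conf e hadj hmM hm'M _ _ (by omega)
  · unfold List.Chain'; rw [List.isChain_map]
    refine (List.isChain_range_succ _ _).2 ?_
    intro n hn
    right
    rcases pAR_step D N n hD hN hn with ⟨h1, h2, h3, h4⟩ | ⟨h1, h2, h3, h4⟩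
    · rw [hg]; simp only; rw [h1, h2]
      exact upd_rm e _ _ h3 h4 hm0
    · rw [hg]; simp only; rw [h1, h2]
      exact upd_fill e _ _ h3 h4 hm'0
  · have hHs : HO K L (fun _ : SiteO K L => m) = -(N : ℤ) := by
      have h0 := pAR_zero D N hD hN
      have := HO_conf e 0 0 le_rfl (by omega) hm0 hm'0
      rw [conf_zero] at this
      rw [this]; ring
    have hub : ∀ h ∈ {h : ℤ | ∃ η ∈ (List.range (2*N+1)).map g, HO K L η = h},
        h ≤ (D : ℤ) + 1 - N := by
      rintro h ⟨η, hη, rfl⟩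
      rcases List.mem_map.1 hη with ⟨n, hn, rfl⟩
      rw [List.mem_range] at hn
      have hinv := pAR_inv D N n hD hN (by omega)
      rw [hg]
      simp only
      rw [HO_conf e _ _ hinv.1 hinv.2.1 hm0 hm'0]
      have := hinv.2.2.1
      omega
    have hmem : ((D : ℤ) + 1 - N) ∈
        {h : ℤ | ∃ η ∈ (List.range (2*N+1)).map g, HO K L η = h} := by
      refine ⟨g (D+1), List.mem_map.2 ⟨D+1, List.mem_range.2 (by omega), rfl⟩, ?_⟩
      have hp := pAR_peak D N hD hN
      rw [hg]
      simp only
      rw [hp.1, hp.2, HO_conf e _ _ (by omega) (by omega) hm0 hm'0]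
      push_cast
      ring
    have hht : heightO K L ((List.range (2*N+1)).map g) = (D : ℤ) + 1 - N := by
      unfold heightO
      exact le_antisymm (csSup_le ⟨_, hmem⟩ hub) (le_csSup ⟨_, hub⟩ hmem)
    rw [hht, hHs]
    ring

/-- Reference path between distinct stable configurations of the
Widom–Rowlinson model on the open `K × L` lattice: there is a path whose
height above `H(s)` is exactly `min{K,L} + 1`. -/
theorem reference_path_open (K L M : ℕ)
    (hK : 2 ≤ K) (hL : 2 ≤ L) (hM : 2 ≤ M)
    (s s' : SiteO K L → ℕ) (hs : s ∈ stableO K L M) (hs' : s' ∈ stableO K L M)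
    (hne : s ≠ s') :
    ∃ ω : List (SiteO K L → ℕ),
      IsPathO K L M ω s s' ∧
        heightO K L ω - HO K L s = ((min K L : ℕ) : ℤ) + 1 := by
  obtain ⟨m, hm1, hmM, rfl⟩ := hs
  obtain ⟨m', hm'1, hm'M, rfl⟩ := hs'
  rcases le_or_gt K L with hKL | hKL
  · -- D = K, column-major: e = finProdFinEquiv : Fin L × Fin K ≃ Fin (L*K)
    have hmin : min K L = K := min_eq_left hKL
    rw [hmin]
    have hadj : ∀ v w : SiteO K L, adjO K L v w →
        ((finProdFinEquiv v : ℕ) ≤ (finProdFinEquiv w : ℕ) + K) := by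
      intro v w hvw
      have hv : (finProdFinEquiv v : ℕ) = (v.2 : ℕ) + K * (v.1 : ℕ) := rfl
      have hw : (finProdFinEquiv w : ℕ) = (w.2 : ℕ) + K * (w.1 : ℕ) := rfl
      rw [hv, hw]
      rcases hvw with ⟨h1, h2⟩ | ⟨h1, h2⟩
      · have h1' : (v.2 : ℕ) = (w.2 : ℕ) := by rw [h1]
        rcases h2 with h | h
        · have : K * ((v.1 : ℕ) + 1) = K * (w.1 : ℕ) := by rw [h]
          have h3 : K * (v.1 : ℕ) + K = K * (w.1 : ℕ) := by linarith [Nat.mul_succ K (v.1 : ℕ), this]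
          linarith
        · have : K * ((w.1 : ℕ) + 1) = K * (v.1 : ℕ) := by rw [h]
          have h3 : K * (w.1 : ℕ) + K = K * (v.1 : ℕ) := by linarith [Nat.mul_succ K (w.1 : ℕ), this]
          linarith
      · have h1' : K * (v.1 : ℕ) = K * (w.1 : ℕ) := by rw [h1]
        have : (v.2 : ℕ) ≤ (w.2 : ℕ) + 1 := by omega
        linarith
    exact main_aux K L M (L*K) K finProdFinEquiv m m' (by omega)
      (Nat.mul_le_mul_right K hL) hadj hm1 hm'1 hmM hm'M
  · -- D = L, row-major
    have hmin : min K L = L := min_eq_right (le_of_lt hKL)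
    rw [hmin]
    set e : SiteO K L ≃ Fin (K*L) :=
      (Equiv.prodComm (Fin L) (Fin K)).trans finProdFinEquiv with he
    have hadj : ∀ v w : SiteO K L, adjO K L v w →
        ((e v : ℕ) ≤ (e w : ℕ) + L) := by
      intro v w hvw
      have hv : (e v : ℕ) = (v.1 : ℕ) + L * (v.2 : ℕ) := rfl
      have hw : (e w : ℕ) = (w.1 : ℕ) + L * (w.2 : ℕ) := rfl
      rw [hv, hw]
      rcases hvw with ⟨h1, h2⟩ | ⟨h1, h2⟩
      · have h1' : L * (v.2 : ℕ) = L * (w.2 : ℕ) := by rw [h1]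
        have : (v.1 : ℕ) ≤ (w.1 : ℕ) + 1 := by omega
        linarith
      · have h1' : (v.1 : ℕ) = (w.1 : ℕ) := by rw [h1]
        rcases h2 with h | h
        · have : L * ((v.2 : ℕ) + 1) = L * (w.2 : ℕ) := by rw [h]
          have h3 : L * (v.2 : ℕ) + L = L * (w.2 : ℕ) := by linarith [Nat.mul_succ L (v.2 : ℕ), this]
          linarith
        · have : L * ((w.2 : ℕ) + 1) = L * (v.2 : ℕ) := by rw [h]
          have h3 : L * (w.2 : ℕ) + L = L * (v.2 : ℕ) := by linarith [Nat.mul_succ L (w.2 : ℕ), this]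
          linarith
    exact main_aux K L M (K*L) L e m m' (by omega)
      (Nat.mul_le_mul_right L hK) hadj hm1 hm'1 hmM hm'M
end

section
/- Consider the Widom–Rowlinson model with M ≥ 2 particle types on the K×L square lattice Λ with open boundary conditions. Then for every pair of distinct stable configurations s, s' ∈ X^s, the communication height satisfies Φ(s,s') − H(s) = min{K,L} + 1. -/
noncomputable def nzO (K L : ℕ) (σ : SiteO K L → ℕ) : ℕ :=
  (Finset.univ.filter (fun v : SiteO K L => σ v = 0)).card







-- number of zeros

lemma nz_le (K L : ℕ) (σ : SiteO K L → ℕ) : nzO K L σ ≤ L * K := by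
  classical
  calc nzO K L σ ≤ (Finset.univ : Finset (SiteO K L)).card := Finset.card_filter_le _ _
  _ = L * K := by simp [Finset.card_univ]

lemma HO_eq (K L : ℕ) (σ : SiteO K L → ℕ) :
    HO K L σ = (nzO K L σ : ℤ) - (L * K : ℕ) := by
  classical
  have h1 : Nat.card {v : SiteO K L // σ v ≠ 0}
      = (Finset.univ.filter (fun v : SiteO K L => ¬ σ v = 0)).card := by
    rw [Nat.card_eq_fintype_card, Fintype.card_subtype]
  have h2 : (Finset.univ.filter (fun v : SiteO K L => σ v = 0)).card
      + (Finset.univ.filter (fun v : SiteO K L => ¬ σ v = 0)).card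
      = L * K := by
    rw [Finset.card_filter_add_card_filter_not]
    simp [Finset.card_univ]
  have h3 : (Finset.univ.filter (fun v : SiteO K L => ¬ σ v = 0)).card
      = L * K - nzO K L σ := by unfold nzO; omega
  rw [HO, h1, h3]
  have h4 := nz_le K L σ
  simp only [nzO] at *
  omega

lemma HO_le_zero (K L : ℕ) (σ : SiteO K L → ℕ) : HO K L σ ≤ 0 := by
  have : (0:ℤ) ≤ (Nat.card {v : SiteO K L // σ v ≠ 0} : ℤ) := Int.natCast_nonneg _
  rw [HO]; omega

lemma neg_le_HO (K L : ℕ) (σ : SiteO K L → ℕ) : -(L*K : ℕ) ≤ HO K L σ := by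
  rw [HO_eq]; push_cast; omega







section rowcol
variable {K L M : ℕ} {σ τ η : SiteO K L → ℕ}

lemma row_const (hw : IsWRO K L M σ) (i : Fin K) (hz : ∀ j, σ (j, i) ≠ 0) :
    ∀ j j', σ (j, i) = σ (j', i) := by
  have key : ∀ n (h : n < L), σ (⟨n, h⟩, i) = σ (⟨0, Nat.zero_lt_of_lt h⟩, i) := by
    intro n
    induction n with
    | zero => intro h; rfl
    | succ k ih =>
      intro h
      have hk : k < L := Nat.lt_of_succ_lt h
      have hadj : adjO K L (⟨⟨k, hk⟩, i⟩) (⟨⟨k+1, h⟩, i⟩) := by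
        left; exact ⟨rfl, Or.inl rfl⟩
      rcases hw.2 _ _ hadj with h0 | h0 | h0
      · exact absurd h0 (hz _)
      · exact absurd h0 (hz _)
      · rw [← h0, ih hk]
  intro j j'
  rw [key j.1 j.2, key j'.1 j'.2]

lemma col_const (hw : IsWRO K L M σ) (j : Fin L) (hz : ∀ i, σ (j, i) ≠ 0) :
    ∀ i i', σ (j, i) = σ (j, i') := by
  have key : ∀ n (h : n < K), σ (j, ⟨n, h⟩) = σ (j, ⟨0, Nat.zero_lt_of_lt h⟩) := by
    intro n
    induction n with
    | zero => intro h; rfl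
    | succ k ih =>
      intro h
      have hk : k < K := Nat.lt_of_succ_lt h
      have hadj : adjO K L (⟨j, ⟨k, hk⟩⟩) (⟨j, ⟨k+1, h⟩⟩) := by
        right; exact ⟨rfl, Or.inl rfl⟩
      rcases hw.2 _ _ hadj with h0 | h0 | h0
      · exact absurd h0 (hz _)
      · exact absurd h0 (hz _)
      · rw [← h0, ih hk]
  intro i i'
  rw [key i.1 i.2, key i'.1 i'.2]

lemma exists_zf_row_ne (σ : SiteO K L → ℕ) (u : Fin K) (h : nzO K L σ + 1 < K) :
    ∃ i : Fin K, i ≠ u ∧ ∀ j, σ (j, i) ≠ 0 := by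
  classical
  by_contra hc
  push_neg at hc
  have hsub : (Finset.univ : Finset (Fin K))
      ⊆ insert u ((Finset.univ.filter (fun v : SiteO K L => σ v = 0)).image Prod.snd) := by
    intro i _
    by_cases hi : i = u
    · simp [hi]
    · obtain ⟨j, hj⟩ := hc i hi
      simp only [Finset.mem_insert, Finset.mem_image, Finset.mem_filter, Finset.mem_univ,
        true_and]
      exact Or.inr ⟨(j, i), hj, rfl⟩
  have h1 := Finset.card_le_card hsub
  have h2 := Finset.card_insert_le u
    ((Finset.univ.filter (fun v : SiteO K L => σ v = 0)).image Prod.snd)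
  have h3 := Finset.card_image_le (s := Finset.univ.filter (fun v : SiteO K L => σ v = 0))
    (f := Prod.snd)
  simp only [Finset.card_univ, Fintype.card_fin] at h1
  unfold nzO at h
  omega

lemma exists_zf_row (σ : SiteO K L → ℕ) (h : nzO K L σ < K) :
    ∃ i : Fin K, ∀ j, σ (j, i) ≠ 0 := by
  classical
  by_contra hc
  push_neg at hc
  have hsub : (Finset.univ : Finset (Fin K))
      ⊆ (Finset.univ.filter (fun v : SiteO K L => σ v = 0)).image Prod.snd := by
    intro i _
    obtain ⟨j, hj⟩ := hc i
    simp only [Finset.mem_image, Finset.mem_filter, Finset.mem_univ, true_and]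
    exact ⟨(j, i), hj, rfl⟩
  have h1 := Finset.card_le_card hsub
  have h3 := Finset.card_image_le (s := Finset.univ.filter (fun v : SiteO K L => σ v = 0))
    (f := Prod.snd)
  simp only [Finset.card_univ, Fintype.card_fin] at h1
  unfold nzO at h
  omega

lemma exists_zf_col (σ : SiteO K L → ℕ) (h : nzO K L σ < L) :
    ∃ j : Fin L, ∀ i, σ (j, i) ≠ 0 := by
  classical
  by_contra hc
  push_neg at hc
  have hsub : (Finset.univ : Finset (Fin L))
      ⊆ (Finset.univ.filter (fun v : SiteO K L => σ v = 0)).image Prod.fst := by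
    intro j _
    obtain ⟨i, hi⟩ := hc j
    simp only [Finset.mem_image, Finset.mem_filter, Finset.mem_univ, true_and]
    exact ⟨(j, i), hi, rfl⟩
  have h1 := Finset.card_le_card hsub
  have h3 := Finset.card_image_le (s := Finset.univ.filter (fun v : SiteO K L => σ v = 0))
    (f := Prod.fst)
  simp only [Finset.card_univ, Fintype.card_fin] at h1
  unfold nzO at h
  omega

lemma nz_step (v : SiteO K L) (hv : η v = 0) (hv' : σ v ≠ 0)
    (h : ∀ w, w ≠ v → η w = σ w) : nzO K L σ + 1 = nzO K L η := by
  classical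
  have hset : (Finset.univ.filter (fun x : SiteO K L => η x = 0))
      = insert v (Finset.univ.filter (fun x : SiteO K L => σ x = 0)) := by
    ext w
    simp only [Finset.mem_insert, Finset.mem_filter, Finset.mem_univ, true_and]
    by_cases hw : w = v
    · subst hw; simp [hv]
    · rw [h w hw]
      constructor
      · exact fun hh => Or.inr hh
      · rintro (hh | hh)
        · exact absurd hh hw
        · exact hh
  have hnm : v ∉ Finset.univ.filter (fun x : SiteO K L => σ x = 0) := by
    simp [hv']
  unfold nzO
  rw [hset, Finset.card_insert_of_notMem hnm]

lemma nz_upd (h : UpdO K L σ τ) :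
    nzO K L τ + 1 = nzO K L σ ∨ nzO K L σ + 1 = nzO K L τ := by
  obtain ⟨v, h0, hne, hrest⟩ := h
  rcases h0 with h0 | h0
  · exact Or.inl (nz_step v h0 (fun hh => hne (h0.trans hh.symm)) hrest)
  · refine Or.inr (nz_step v h0 ?_ (fun w hw => (hrest w hw).symm))
    exact fun hh => hne (hh.trans h0.symm)

lemma upd_dir (h : UpdO K L η σ) (hc : nzO K L σ + 1 = nzO K L η) :
    ∃ v, η v = 0 ∧ σ v ≠ 0 ∧ ∀ w, w ≠ v → η w = σ w := by
  obtain ⟨v, h0, hne, hrest⟩ := h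
  rcases h0 with h0 | h0
  · have hσ : σ v ≠ 0 := fun hh => hne (h0.trans hh.symm)
    exact ⟨v, h0, hσ, hrest⟩
  · exfalso
    have hη : η v ≠ 0 := fun hh => hne (hh.trans h0.symm)
    have := nz_step v h0 hη (fun w hw => (hrest w hw).symm)
    omega

end rowcol

section dom
variable {K L M : ℕ} {σ τ η : SiteO K L → ℕ}

def Dom (K L : ℕ) (σ : SiteO K L → ℕ) (a : ℕ) : Prop :=
  a ≠ 0 ∧ ∃ i : Fin K, ∀ j, σ (j, i) = a

lemma dom_exists (hL : 2 ≤ L) (hw : IsWRO K L M σ) (h : nzO K L σ < K) :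
    ∃ a, Dom K L σ a := by
  obtain ⟨i, hi⟩ := exists_zf_row σ h
  have hL0 : 0 < L := by omega
  refine ⟨σ (⟨0, hL0⟩, i), hi _, i, fun j => row_const hw i hi j _⟩

lemma dom_unique (hw : IsWRO K L M σ) (h : nzO K L σ < L) {a b : ℕ}
    (ha : Dom K L σ a) (hb : Dom K L σ b) : a = b := by
  obtain ⟨j, hj⟩ := exists_zf_col σ h
  obtain ⟨ha0, ia, hia⟩ := ha
  obtain ⟨hb0, ib, hib⟩ := hb
  have := col_const hw j hj ia ib
  rw [hia j, hib j] at this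
  exact this

-- preservation of Dom along an update staying strictly below level P = min K L
lemma dom_pres (hK : 2 ≤ K) (hL : 2 ≤ L) (hwσ : IsWRO K L M σ) (hwτ : IsWRO K L M τ)
    (hu : UpdO K L σ τ) (hσ : nzO K L σ < min K L) (hτ : nzO K L τ < min K L)
    {a : ℕ} (ha : Dom K L σ a) : Dom K L τ a := by
  obtain ⟨u, h0, hne, hrest⟩ := hu
  -- one of the two has nz + 1 < min K L ≤ K
  have hcnt := nz_upd ⟨u, h0, hne, hrest⟩
  have hsmall : nzO K L σ + 1 < K ∨ nzO K L τ + 1 < K := by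
    have h1 : min K L ≤ K := Nat.min_le_left _ _
    omega
  have key : ∃ i : Fin K, i ≠ u.2 ∧ (∀ j, σ (j, i) ≠ 0) ∧ (∀ j, σ (j, i) = τ (j, i)) := by
    rcases hsmall with hs | hs
    · obtain ⟨i, hiu, hi⟩ := exists_zf_row_ne σ u.2 hs
      refine ⟨i, hiu, hi, fun j => hrest (j, i) ?_⟩
      intro hh; exact hiu (congrArg Prod.snd hh)
    · obtain ⟨i, hiu, hi⟩ := exists_zf_row_ne τ u.2 hs
      have heq : ∀ j, σ (j, i) = τ (j, i) := fun j => hrest (j, i) (by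
        intro hh; exact hiu (congrArg Prod.snd hh))
      exact ⟨i, hiu, fun j => (heq j) ▸ hi j, heq⟩
  obtain ⟨i, hiu, hzf, heq⟩ := key
  have hL0 : 0 < L := by omega
  set c := σ (⟨0, hL0⟩, i) with hc
  have hrowσ : ∀ j, σ (j, i) = c := fun j => row_const hwσ i hzf j _
  have hzfτ : ∀ j, τ (j, i) ≠ 0 := fun j => (heq j) ▸ hzf j
  have hrowτ : ∀ j, τ (j, i) = c := by
    intro j
    rw [← heq j, hrowσ j]
  have hdomσc : Dom K L σ c := ⟨hzf _, i, hrowσ⟩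
  have hdomτc : Dom K L τ c := ⟨hzf _, i, hrowτ⟩
  have hac : a = c := dom_unique hwσ (lt_of_lt_of_le hσ (Nat.min_le_right _ _)) ha hdomσc
  rw [hac]; exact hdomτc

end dom

section crux
variable {K L M : ℕ} {σ σ' η : SiteO K L → ℕ}

lemma crux (hK : 2 ≤ K) (hL : 2 ≤ L)
    (hwη : IsWRO K L M η) (hwσ : IsWRO K L M σ) (hwσ' : IsWRO K L M σ')
    (huσ : UpdO K L η σ) (huσ' : UpdO K L η σ')
    (hη : nzO K L η = min K L) (hσ : nzO K L σ + 1 = min K L)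
    (hσ' : nzO K L σ' + 1 = min K L)
    {a b : ℕ} (ha : Dom K L σ a) (hb : Dom K L σ' b) : a = b := by
  classical
  have hσL : nzO K L σ < L := by have := Nat.min_le_right K L; omega
  have hσ'L : nzO K L σ' < L := by have := Nat.min_le_right K L; omega
  obtain ⟨v, hv0, hvσ, hvrest⟩ := upd_dir huσ (by omega)
  obtain ⟨w, hw0, hwσ'0, hwrest⟩ := upd_dir huσ' (by omega)
  by_cases hrow : ∃ i : Fin K, ∀ j, η (j, i) ≠ 0
  · -- Case A : zero-free row of η
    obtain ⟨i, hi⟩ := hrow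
    have hvi : v.2 ≠ i := by
      intro hh
      exact hi v.1 (by rw [show ((v.1), i) = v from Prod.ext rfl hh.symm]; exact hv0)
    have hwi : w.2 ≠ i := by
      intro hh
      exact hi w.1 (by rw [show ((w.1), i) = w from Prod.ext rfl hh.symm]; exact hw0)
    have heqσ : ∀ j, σ (j, i) = η (j, i) := by
      intro j
      exact (hvrest (j, i) (by intro hh; exact hvi (congrArg Prod.snd hh).symm)).symm
    have heqσ' : ∀ j, σ' (j, i) = η (j, i) := by
      intro j
      exact (hwrest (j, i) (by intro hh; exact hwi (congrArg Prod.snd hh).symm)).symm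
    have hzfσ : ∀ j, σ (j, i) ≠ 0 := fun j => by rw [heqσ j]; exact hi j
    have hzfσ' : ∀ j, σ' (j, i) ≠ 0 := fun j => by rw [heqσ' j]; exact hi j
    have hL0 : 0 < L := by omega
    have hdσ : Dom K L σ (η (⟨0, hL0⟩, i)) := by
      refine ⟨by rw [← heqσ ⟨0, hL0⟩]; exact hzfσ _, i, fun j => ?_⟩
      rw [row_const hwσ i hzfσ j ⟨0, hL0⟩, heqσ]
    have hdσ' : Dom K L σ' (η (⟨0, hL0⟩, i)) := by
      refine ⟨by rw [← heqσ' ⟨0, hL0⟩]; exact hzfσ' _, i, fun j => ?_⟩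
      rw [row_const hwσ' i hzfσ' j ⟨0, hL0⟩, heqσ']
    rw [dom_unique hwσ hσL ha hdσ, dom_unique hwσ' hσ'L hb hdσ']
  by_cases hcol : ∃ j : Fin L, ∀ i, η (j, i) ≠ 0
  · -- Case A' : zero-free column of η
    obtain ⟨j, hj⟩ := hcol
    have hvj : v.1 ≠ j := by
      intro hh
      exact hj v.2 (by rw [show ((j : Fin L), (v.2 : Fin K)) = v from Prod.ext hh.symm rfl]; exact hv0)
    have hwj : w.1 ≠ j := by
      intro hh
      exact hj w.2 (by rw [show ((j : Fin L), (w.2 : Fin K)) = w from Prod.ext hh.symm rfl]; exact hw0)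
    obtain ⟨ha0, ia, hia⟩ := ha
    obtain ⟨hb0, ib, hib⟩ := hb
    have h1 : σ (j, ia) = η (j, ia) :=
      (hvrest (j, ia) (by intro hh; exact hvj (congrArg Prod.fst hh).symm)).symm
    have h2 : σ' (j, ib) = η (j, ib) :=
      (hwrest (j, ib) (by intro hh; exact hwj (congrArg Prod.fst hh).symm)).symm
    calc a = σ (j, ia) := (hia j).symm
    _ = η (j, ia) := h1
    _ = η (j, ib) := col_const hwη j hj ia ib
    _ = σ' (j, ib) := h2.symm
    _ = b := hib j
  -- Case B : every row and every column of η contains a zero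
  push_neg at hrow hcol
  have hKm : K = min K L := by
    by_contra hh
    have : nzO K L η < K := by have := Nat.min_le_left K L; omega
    obtain ⟨i, hi⟩ := exists_zf_row η this
    obtain ⟨j, hj⟩ := hrow i
    exact hi j hj
  have hLm : L = min K L := by
    by_contra hh
    have : nzO K L η < L := by have := Nat.min_le_right K L; omega
    obtain ⟨j, hj⟩ := exists_zf_col η this
    obtain ⟨i, hi⟩ := hcol j
    exact hj i hi
  -- injectivity of row / column projections on the zero set of η
  have hZcard : (Finset.univ.filter (fun x : SiteO K L => η x = 0)).card = nzO K L η := rfl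
  have rowinj : ∀ x y : SiteO K L, η x = 0 → η y = 0 → x.2 = y.2 → x = y := by
    have hsub : (Finset.univ : Finset (Fin K))
        ⊆ (Finset.univ.filter (fun x : SiteO K L => η x = 0)).image Prod.snd := by
      intro i _
      obtain ⟨j, hj⟩ := hrow i
      simp only [Finset.mem_image, Finset.mem_filter, Finset.mem_univ, true_and]
      exact ⟨(j, i), hj, rfl⟩
    have h1 := Finset.card_le_card hsub
    have h3 := Finset.card_image_le (s := Finset.univ.filter (fun x : SiteO K L => η x = 0))
      (f := Prod.snd)
    simp only [Finset.card_univ, Fintype.card_fin] at h1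
    have hcardeq : ((Finset.univ.filter (fun x : SiteO K L => η x = 0)).image Prod.snd).card
        = (Finset.univ.filter (fun x : SiteO K L => η x = 0)).card := by omega
    have hinj := Finset.card_image_iff.mp hcardeq
    intro x y hx hy hxy
    exact hinj (by simp [hx]) (by simp [hy]) hxy
  have colinj : ∀ x y : SiteO K L, η x = 0 → η y = 0 → x.1 = y.1 → x = y := by
    have hsub : (Finset.univ : Finset (Fin L))
        ⊆ (Finset.univ.filter (fun x : SiteO K L => η x = 0)).image Prod.fst := by
      intro j _
      obtain ⟨i, hi⟩ := hcol j
      simp only [Finset.mem_image, Finset.mem_filter, Finset.mem_univ, true_and]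
      exact ⟨(j, i), hi, rfl⟩
    have h1 := Finset.card_le_card hsub
    have h3 := Finset.card_image_le (s := Finset.univ.filter (fun x : SiteO K L => η x = 0))
      (f := Prod.fst)
    simp only [Finset.card_univ, Fintype.card_fin] at h1
    have hcardeq : ((Finset.univ.filter (fun x : SiteO K L => η x = 0)).image Prod.fst).card
        = (Finset.univ.filter (fun x : SiteO K L => η x = 0)).card := by omega
    have hinj := Finset.card_image_iff.mp hcardeq
    intro x y hx hy hxy
    exact hinj (by simp [hx]) (by simp [hy]) hxy
  -- main sub-claim, applied to (σ, v, a) and (σ', w, b)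
  have main : ∀ (τ : SiteO K L → ℕ) (u : SiteO K L) (c : ℕ), IsWRO K L M τ →
      τ u ≠ 0 → η u = 0 → (∀ x, x ≠ u → η x = τ x) → Dom K L τ c →
      (∀ x : SiteO K L, x ≠ u → x.2 = u.2 → η x = c) ∧
      (∀ x : SiteO K L, x ≠ u → x.1 = u.1 → η x = c) := by
    intro τ u c hwτ huτ hu0 hrest ⟨hc0, ic, hic⟩
    have hicu : ic = u.2 := by
      by_contra hh
      obtain ⟨j0, hj0⟩ := hrow ic
      have hne : ((j0, ic) : SiteO K L) ≠ u := by
        intro heq; exact hh (congrArg Prod.snd heq)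
      have : τ (j0, ic) = 0 := by rw [← hrest _ hne]; exact hj0
      rw [hic j0] at this; exact hc0 this
    subst hicu
    have hrowv : ∀ x : SiteO K L, x ≠ u → x.2 = u.2 → η x = c := by
      intro x hx hx2
      have : η x = τ x := hrest x hx
      rw [this, show x = (x.1, u.2) from Prod.ext rfl hx2]
      exact hic x.1
    refine ⟨hrowv, ?_⟩
    have hzfcol : ∀ i, τ (u.1, i) ≠ 0 := by
      intro i hzero
      by_cases hh : ((u.1, i) : SiteO K L) = u
      · rw [hh] at hzero; exact huτ hzero
      · have : η (u.1, i) = 0 := by rw [hrest _ hh]; exact hzero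
        exact hh (colinj _ _ this hu0 rfl)
    have hcc := col_const hwτ u.1 hzfcol
    have hval : τ (u.1, u.2) = c := hic u.1
    intro x hx hx1
    have : η x = τ x := hrest x hx
    rw [this, show x = (u.1, x.2) from Prod.ext hx1 rfl]
    rw [hcc x.2 u.2, hval]
  obtain ⟨hrowva, hcolva⟩ := main σ v a hwσ hvσ hv0 hvrest ha
  obtain ⟨hrowwb, hcolwb⟩ := main σ' w b hwσ' hwσ'0 hw0 hwrest hb
  by_cases hvw : v = w
  · subst hvw
    haveI : Nontrivial (Fin L) := Fin.nontrivial_iff_two_le.mpr hL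
    obtain ⟨j, hj⟩ := exists_ne v.1
    have hx : ((j, v.2) : SiteO K L) ≠ v := by
      intro hh; exact hj (congrArg Prod.fst hh)
    rw [← hrowva _ hx rfl, hrowwb _ hx rfl]
  · have h2 : v.2 ≠ w.2 := by
      intro hh; exact hvw (rowinj v w hv0 hw0 hh)
    have h1 : v.1 ≠ w.1 := by
      intro hh; exact hvw (colinj v w hv0 hw0 hh)
    have hxv : ((v.1, w.2) : SiteO K L) ≠ v := by
      intro hh
      have h' := congrArg Prod.snd hh
      simp only [] at h'
      exact h2 h'.symm
    have hxw : ((v.1, w.2) : SiteO K L) ≠ w := by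
      intro hh
      have h' := congrArg Prod.fst hh
      simp only [] at h'
      exact h1 h'
    rw [← hcolva _ hxv rfl, hrowwb _ hxw rfl]

end crux

section invpath
variable {K L M : ℕ} {σ τ : SiteO K L → ℕ}

lemma updO_symm (h : UpdO K L σ τ) : UpdO K L τ σ := by
  obtain ⟨v, h0, hne, hrest⟩ := h
  exact ⟨v, h0.symm, fun hh => hne hh.symm, fun w hw => (hrest w hw).symm⟩

def DomInv (K L M : ℕ) (a : ℕ) (σ : SiteO K L → ℕ) : Prop :=
  (nzO K L σ < min K L ∧ Dom K L σ a) ∨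
  (nzO K L σ = min K L ∧ ∀ σ', IsWRO K L M σ' → UpdO K L σ σ' →
     nzO K L σ' + 1 = min K L → ∀ b, Dom K L σ' b → b = a)

lemma dominv_step (hK : 2 ≤ K) (hL : 2 ≤ L) (hwσ : IsWRO K L M σ) (hwτ : IsWRO K L M τ)
    (hstep : σ = τ ∨ UpdO K L σ τ) (hσ : nzO K L σ ≤ min K L) (hτ : nzO K L τ ≤ min K L)
    {a : ℕ} (hi : DomInv K L M a σ) : DomInv K L M a τ := by
  rcases hstep with rfl | hu
  · exact hi
  have hcnt := nz_upd hu
  rcases hi with ⟨hlt, hdom⟩ | ⟨heq, hclause⟩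
  · by_cases hτlt : nzO K L τ < min K L
    · exact Or.inl ⟨hτlt, dom_pres hK hL hwσ hwτ hu hlt hτlt hdom⟩
    · have hτeq : nzO K L τ = min K L := by omega
      refine Or.inr ⟨hτeq, fun σ' hwσ' hu' hc' b hb => ?_⟩
      have hσc : nzO K L σ + 1 = min K L := by omega
      exact (crux hK hL hwτ hwσ hwσ' (updO_symm hu) hu' hτeq hσc hc' hdom hb).symm
  · have hτc : nzO K L τ + 1 = min K L := by
      have hmin : 2 ≤ min K L := le_min hK hL
      omega
    have hτlt : nzO K L τ < min K L := by omega
    obtain ⟨c, hc⟩ := dom_exists hL hwτ (lt_of_lt_of_le hτlt (Nat.min_le_left _ _))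
    have := hclause τ hwτ hu hτc c hc
    exact Or.inl ⟨hτlt, this ▸ hc⟩

lemma dominv_chain (hK : 2 ≤ K) (hL : 2 ≤ L) :
    ∀ (ω : List (SiteO K L → ℕ)) (hne : ω ≠ []),
    (∀ η ∈ ω, IsWRO K L M η) → (∀ η ∈ ω, nzO K L η ≤ min K L) →
    ω.Chain' (fun η η' => η = η' ∨ UpdO K L η η') →
    ∀ a, DomInv K L M a (ω.head hne) → DomInv K L M a (ω.getLast hne) := by
  intro ω
  induction ω with
  | nil => intro hne; exact absurd rfl hne
  | cons x t ih =>
    intro hne hwr hnz hchain a hinv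
    cases t with
    | nil => exact hinv
    | cons y t' =>
      have hchain' := List.isChain_cons_cons.mp hchain
      have hstep := hchain'.1
      have hwx : IsWRO K L M x := hwr x (by simp)
      have hwy : IsWRO K L M y := hwr y (by simp)
      have hinvy : DomInv K L M a y :=
        dominv_step hK hL hwx hwy hstep (hnz x (by simp)) (hnz y (by simp)) hinv
      have hlast : (x :: y :: t').getLast hne = (y :: t').getLast (by simp) :=
        List.getLast_cons (by simp)
      rw [hlast]
      exact ih (by simp) (fun η hη => hwr η (by simp [hη]))
        (fun η hη => hnz η (by simp [hη])) hchain'.2 a hinvy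
end invpath

section lowerb
variable {K L M : ℕ}

lemma path_lower_bound (hK : 2 ≤ K) (hL : 2 ≤ L) {m m' : ℕ}
    (hm : m ≠ 0) (hm' : m' ≠ 0) (hmm : m ≠ m')
    (ω : List (SiteO K L → ℕ))
    (hp : IsPathO K L M ω (fun _ => m) (fun _ => m')) :
    ∃ η ∈ ω, min K L + 1 ≤ nzO K L η := by
  by_contra hc
  push_neg at hc
  have hnz : ∀ η ∈ ω, nzO K L η ≤ min K L := fun η hη => by
    have := hc η hη; omega
  obtain ⟨hne, hhead, hlastq, hwr, hchain⟩ := hp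
  have hhead' : ω.head hne = (fun _ => m) := by
    have := List.head?_eq_head hne
    rw [this] at hhead
    exact Option.some_injective _ hhead
  have hlast' : ω.getLast hne = (fun _ => m') := by
    have := List.getLast?_eq_getLast hne
    rw [this] at hlastq
    exact Option.some_injective _ hlastq
  have hnzconst : ∀ c : ℕ, c ≠ 0 → nzO K L (fun _ : SiteO K L => c) = 0 := by
    intro c hc0
    unfold nzO
    rw [Finset.card_eq_zero]
    ext v
    simp [hc0]
  have hmin2 : 2 ≤ min K L := le_min hK hL
  have hinv0 : DomInv K L M m (ω.head hne) := by
    rw [hhead']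
    refine Or.inl ⟨by rw [hnzconst m hm]; omega, hm, ⟨0, by omega⟩, fun j => rfl⟩
  have hinvl := dominv_chain hK hL ω hne hwr hnz hchain m hinv0
  rw [hlast'] at hinvl
  rcases hinvl with ⟨_, hdom⟩ | ⟨heq, _⟩
  · obtain ⟨_, i, hi⟩ := hdom
    exact hmm (hi ⟨0, by omega⟩).symm
  · rw [hnzconst m' hm'] at heq
    omega

end lowerb

section construct
variable {K L M : ℕ}

def pcc (K L m m' j a b : ℕ) : SiteO K L → ℕ := fun v =>
  if (v.1 : ℕ) < j ∨ ((v.1 : ℕ) = j ∧ (v.2 : ℕ) < a) then m'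
  else if (v.1 : ℕ) = j ∨ ((v.1 : ℕ) = j + 1 ∧ (v.2 : ℕ) < b) then 0
  else m

def cfgA (K L m i : ℕ) : SiteO K L → ℕ := fun v =>
  if (v.1 : ℕ) = 0 ∧ (v.2 : ℕ) < i then 0 else m

def cfgC (K L m' i : ℕ) : SiteO K L → ℕ := fun v =>
  if (v.1 : ℕ) = L - 1 ∧ i ≤ (v.2 : ℕ) then 0 else m'

lemma adj_nat {v w : SiteO K L} (h : adjO K L v w) :
    ((v.2 : ℕ) = (w.2 : ℕ) ∧ ((v.1 : ℕ) + 1 = (w.1 : ℕ) ∨ (w.1 : ℕ) + 1 = (v.1 : ℕ))) ∨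
    ((v.1 : ℕ) = (w.1 : ℕ) ∧ ((v.2 : ℕ) + 1 = (w.2 : ℕ) ∨ (w.2 : ℕ) + 1 = (v.2 : ℕ))) := by
  rcases h with ⟨h1, h2⟩ | ⟨h1, h2⟩
  · exact Or.inl ⟨congrArg Fin.val h1, h2⟩
  · exact Or.inr ⟨congrArg Fin.val h1, h2⟩

lemma pcc_wr {m m' j a b : ℕ} (hm : 1 ≤ m) (hmM : m ≤ M) (hm' : 1 ≤ m') (hm'M : m' ≤ M)
    (hab : a ≤ b) : IsWRO K L M (pcc K L m m' j a b) := by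
  constructor
  · intro v; simp only [pcc, Fin.val_mk]; split_ifs <;> omega
  · intro v w hadj
    have h := adj_nat hadj
    simp only [pcc, Fin.val_mk]
    split_ifs <;> omega

lemma cfgA_wr {m i : ℕ} (hmM : m ≤ M) : IsWRO K L M (cfgA K L m i) := by
  constructor
  · intro v; simp only [cfgA, Fin.val_mk]; split_ifs <;> omega
  · intro v w _
    simp only [cfgA, Fin.val_mk]; split_ifs <;> omega

lemma cfgC_wr {m' i : ℕ} (hm'M : m' ≤ M) : IsWRO K L M (cfgC K L m' i) := by
  constructor
  · intro v; simp only [cfgC, Fin.val_mk]; split_ifs <;> omega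
  · intro v w _
    simp only [cfgC, Fin.val_mk]; split_ifs <;> omega

lemma pcc_at {m m' j a b : ℕ} (x : ℕ) (hx : x < L) (y : ℕ) (hy : y < K) :
    pcc K L m m' j a b (⟨x, hx⟩, ⟨y, hy⟩)
      = if x < j ∨ (x = j ∧ y < a) then m' else if x = j ∨ (x = j + 1 ∧ y < b) then 0 else m :=
  rfl

lemma cfgA_at {m i : ℕ} (x : ℕ) (hx : x < L) (y : ℕ) (hy : y < K) :
    cfgA K L m i (⟨x, hx⟩, ⟨y, hy⟩) = if x = 0 ∧ y < i then 0 else m := rfl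

lemma cfgC_at {m' i : ℕ} (x : ℕ) (hx : x < L) (y : ℕ) (hy : y < K) :
    cfgC K L m' i (⟨x, hx⟩, ⟨y, hy⟩) = if x = L - 1 ∧ i ≤ y then 0 else m' := rfl

lemma cfgA_upd {m i : ℕ} (hm : 1 ≤ m) (hi : i < K) (hL0 : 0 < L) :
    UpdO K L (cfgA K L m i) (cfgA K L m (i + 1)) := by
  refine ⟨(⟨0, hL0⟩, ⟨i, hi⟩), ?_, ?_, ?_⟩
  · right; rw [cfgA_at]; split_ifs <;> omega
  · rw [cfgA_at, cfgA_at]; split_ifs <;> omega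
  · intro w hw
    have hw' : ¬((w.1 : ℕ) = 0 ∧ (w.2 : ℕ) = i) := by
      rintro ⟨h1, h2⟩
      exact hw (Prod.ext (Fin.ext h1) (Fin.ext h2))
    simp only [cfgA]; split_ifs <;> omega

lemma cfgC_upd {m' i : ℕ} (hm' : 1 ≤ m') (hi : i < K) (hL0 : 0 < L) :
    UpdO K L (cfgC K L m' i) (cfgC K L m' (i + 1)) := by
  refine ⟨(⟨L - 1, by omega⟩, ⟨i, hi⟩), ?_, ?_, ?_⟩
  · left; rw [cfgC_at]; split_ifs <;> omega
  · rw [cfgC_at, cfgC_at]; split_ifs <;> omega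
  · intro w hw
    have hw' : ¬((w.1 : ℕ) = L - 1 ∧ (w.2 : ℕ) = i) := by
      rintro ⟨h1, h2⟩
      exact hw (Prod.ext (Fin.ext h1) (Fin.ext h2))
    simp only [cfgC]; split_ifs <;> omega

lemma pcc_upd1 {m m' j a : ℕ} (hm : 1 ≤ m) (hj : j + 1 < L) (ha : a < K) :
    UpdO K L (pcc K L m m' j a a) (pcc K L m m' j a (a + 1)) := by
  refine ⟨(⟨j + 1, hj⟩, ⟨a, ha⟩), ?_, ?_, ?_⟩
  · right; rw [pcc_at]; split_ifs <;> omega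
  · rw [pcc_at, pcc_at]; split_ifs <;> omega
  · intro w hw
    have hw' : ¬((w.1 : ℕ) = j + 1 ∧ (w.2 : ℕ) = a) := by
      rintro ⟨h1, h2⟩
      exact hw (Prod.ext (Fin.ext h1) (Fin.ext h2))
    simp only [pcc, Fin.val_mk]; split_ifs <;> omega

lemma pcc_upd2 {m m' j a : ℕ} (hm' : 1 ≤ m') (hj : j + 1 < L) (ha : a < K) :
    UpdO K L (pcc K L m m' j a (a + 1)) (pcc K L m m' j (a + 1) (a + 1)) := by
  refine ⟨(⟨j, by omega⟩, ⟨a, ha⟩), ?_, ?_, ?_⟩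
  · left; rw [pcc_at]; split_ifs <;> omega
  · rw [pcc_at, pcc_at]; split_ifs <;> omega
  · intro w hw
    have hw' : ¬((w.1 : ℕ) = j ∧ (w.2 : ℕ) = a) := by
      rintro ⟨h1, h2⟩
      exact hw (Prod.ext (Fin.ext h1) (Fin.ext h2))
    simp only [pcc, Fin.val_mk]; split_ifs <;> omega

lemma pcc_KK {m m' j : ℕ} : pcc K L m m' j K K = pcc K L m m' (j + 1) 0 0 := by
  funext v
  have h2 := v.2.isLt
  simp only [pcc, Fin.val_mk]; split_ifs <;> omega

lemma cfgA_K {m m' : ℕ} : cfgA K L m K = pcc K L m m' 0 0 0 := by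
  funext v
  have h2 := v.2.isLt
  simp only [cfgA, pcc, Fin.val_mk]; split_ifs <;> omega

lemma cfgA_0 {m : ℕ} : cfgA K L m 0 = fun _ => m := by
  funext v; simp [cfgA]

lemma cfgC_0 {m m' : ℕ} (hL0 : 0 < L) : cfgC K L m' 0 = pcc K L m m' (L - 1) 0 0 := by
  funext v
  have h1 := v.1.isLt
  simp only [cfgC, pcc, Fin.val_mk]; split_ifs <;> omega

lemma cfgC_K {m' : ℕ} : cfgC K L m' K = fun _ => m' := by
  funext v
  have h2 := v.2.isLt
  simp only [cfgC, Fin.val_mk]; split_ifs <;> omega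

lemma nz_le_of_inj (σ : SiteO K L → ℕ) (N : ℕ) (f : SiteO K L → Fin N)
    (hf : ∀ v w, σ v = 0 → σ w = 0 → f v = f w → v = w) : nzO K L σ ≤ N := by
  classical
  have h := Finset.card_le_card_of_injOn f
    (fun x (_ : x ∈ Finset.univ.filter (fun v : SiteO K L => σ v = 0)) =>
      Finset.mem_univ (f x))
    (by
      intro x hx y hy hxy
      simp only [Finset.coe_filter, Set.mem_setOf_eq, Finset.mem_univ, true_and] at hx hy
      exact hf x y hx hy hxy)
  simpa [nzO, Finset.card_univ] using h

lemma cfgA_nz {m i : ℕ} (hm : 1 ≤ m) : nzO K L (cfgA K L m i) ≤ K := by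
  apply nz_le_of_inj _ K (fun v => v.2)
  intro v w hv hw hf
  have hv1 : (v.1 : ℕ) = 0 := by
    simp only [cfgA] at hv
    split_ifs at hv with h
    · exact h.1
    · omega
  have hw1 : (w.1 : ℕ) = 0 := by
    simp only [cfgA] at hw
    split_ifs at hw with h
    · exact h.1
    · omega
  exact Prod.ext (Fin.ext (hv1.trans hw1.symm)) hf

lemma cfgC_nz {m' i : ℕ} (hm' : 1 ≤ m') : nzO K L (cfgC K L m' i) ≤ K := by
  apply nz_le_of_inj _ K (fun v => v.2)
  intro v w hv hw hf
  have hv1 : (v.1 : ℕ) = L - 1 := by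
    simp only [cfgC] at hv
    split_ifs at hv with h
    · exact h.1
    · omega
  have hw1 : (w.1 : ℕ) = L - 1 := by
    simp only [cfgC] at hw
    split_ifs at hw with h
    · exact h.1
    · omega
  exact Prod.ext (Fin.ext (hv1.trans hw1.symm)) hf

lemma pcc_zero {m m' j a b : ℕ} (hm : 1 ≤ m) (hm' : 1 ≤ m') {v : SiteO K L}
    (hv : pcc K L m m' j a b v = 0) :
    ((v.1 : ℕ) = j ∧ a ≤ (v.2 : ℕ)) ∨ ((v.1 : ℕ) = j + 1 ∧ (v.2 : ℕ) < b) := by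
  simp only [pcc, Fin.val_mk] at hv
  split_ifs at hv with h1 h2 <;> omega

lemma pcc_nz {m m' j a b : ℕ} (hm : 1 ≤ m) (hm' : 1 ≤ m') (hab : b ≤ a + 1) :
    nzO K L (pcc K L m m' j a b) ≤ K + 1 := by
  classical
  apply nz_le_of_inj _ (K + 1)
    (fun v => if (v.1 : ℕ) = j + 1 ∧ (v.2 : ℕ) = a then Fin.last K else (v.2).castSucc)
  intro v w hv hw hf
  have hv' := pcc_zero hm hm' hv
  have hw' := pcc_zero hm hm' hw
  by_cases hsv : (v.1 : ℕ) = j + 1 ∧ (v.2 : ℕ) = a <;>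
    by_cases hsw : (w.1 : ℕ) = j + 1 ∧ (w.2 : ℕ) = a
  · exact Prod.ext (Fin.ext (by omega)) (Fin.ext (by omega))
  · rw [if_pos hsv, if_neg hsw] at hf
    have := congrArg Fin.val hf
    simp only [Fin.val_last, Fin.coe_castSucc] at this
    have := w.2.isLt
    omega
  · rw [if_neg hsv, if_pos hsw] at hf
    have := congrArg Fin.val hf
    simp only [Fin.val_last, Fin.coe_castSucc] at this
    have := v.2.isLt
    omega
  · rw [if_neg hsv, if_neg hsw] at hf
    have h2 : (v.2 : ℕ) = (w.2 : ℕ) := by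
      have := congrArg Fin.val hf
      simpa using this
    exact Prod.ext (Fin.ext (by omega)) (Fin.ext h2)

end construct

section chains
variable {K L M : ℕ}

def RelB (K L M B : ℕ) (σ τ : SiteO K L → ℕ) : Prop :=
  IsWRO K L M σ ∧ IsWRO K L M τ ∧ UpdO K L σ τ ∧ nzO K L σ ≤ B ∧ nzO K L τ ≤ B

lemma nz_const {c : ℕ} (hc : c ≠ 0) : nzO K L (fun _ : SiteO K L => c) = 0 := by
  unfold nzO
  rw [Finset.card_eq_zero]
  ext v
  simp [hc]

lemma chainA {m : ℕ} (hm : 1 ≤ m) (hmM : m ≤ M) (hL0 : 0 < L) :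
    ∀ i, i ≤ K →
      Relation.ReflTransGen (RelB K L M (K + 1)) (cfgA K L m 0) (cfgA K L m i) := by
  intro i
  induction i with
  | zero => intro _; exact Relation.ReflTransGen.refl
  | succ i ih =>
    intro hi
    refine Relation.ReflTransGen.tail (ih (by omega)) ?_
    exact ⟨cfgA_wr hmM, cfgA_wr hmM, cfgA_upd hm (by omega) hL0,
      le_trans (cfgA_nz hm) (by omega), le_trans (cfgA_nz hm) (by omega)⟩

lemma chainC {m' : ℕ} (hm' : 1 ≤ m') (hm'M : m' ≤ M) (hL0 : 0 < L) :
    ∀ i, i ≤ K →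
      Relation.ReflTransGen (RelB K L M (K + 1)) (cfgC K L m' 0) (cfgC K L m' i) := by
  intro i
  induction i with
  | zero => intro _; exact Relation.ReflTransGen.refl
  | succ i ih =>
    intro hi
    refine Relation.ReflTransGen.tail (ih (by omega)) ?_
    exact ⟨cfgC_wr hm'M, cfgC_wr hm'M, cfgC_upd hm' (by omega) hL0,
      le_trans (cfgC_nz hm') (by omega), le_trans (cfgC_nz hm') (by omega)⟩

lemma chainB_in {m m' j : ℕ} (hm : 1 ≤ m) (hmM : m ≤ M) (hm' : 1 ≤ m') (hm'M : m' ≤ M)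
    (hj : j + 1 < L) :
    ∀ i, i ≤ K →
      Relation.ReflTransGen (RelB K L M (K + 1)) (pcc K L m m' j 0 0) (pcc K L m m' j i i) := by
  intro i
  induction i with
  | zero => intro _; exact Relation.ReflTransGen.refl
  | succ i ih =>
    intro hi
    have s1 : RelB K L M (K + 1) (pcc K L m m' j i i) (pcc K L m m' j i (i + 1)) :=
      ⟨pcc_wr hm hmM hm' hm'M (le_refl i), pcc_wr hm hmM hm' hm'M (by omega),
        pcc_upd1 hm hj (by omega),
        pcc_nz hm hm' (by omega), pcc_nz hm hm' (by omega)⟩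
    have s2 : RelB K L M (K + 1) (pcc K L m m' j i (i + 1)) (pcc K L m m' j (i + 1) (i + 1)) :=
      ⟨pcc_wr hm hmM hm' hm'M (by omega), pcc_wr hm hmM hm' hm'M (le_refl (i + 1)),
        pcc_upd2 hm' hj (by omega),
        pcc_nz hm hm' (by omega), pcc_nz hm hm' (by omega)⟩
    exact ((ih (by omega)).tail s1).tail s2

lemma chainB_out {m m' : ℕ} (hm : 1 ≤ m) (hmM : m ≤ M) (hm' : 1 ≤ m') (hm'M : m' ≤ M) :
    ∀ j, j < L →
      Relation.ReflTransGen (RelB K L M (K + 1)) (pcc K L m m' 0 0 0) (pcc K L m m' j 0 0) := by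
  intro j
  induction j with
  | zero => intro _; exact Relation.ReflTransGen.refl
  | succ j ih =>
    intro hj
    have h1 := ih (by omega)
    have h2 := chainB_in (K := K) (M := M) hm hmM hm' hm'M hj K (le_refl K)
    have h3 : pcc K L m m' j K K = pcc K L m m' (j + 1) 0 0 := pcc_KK
    exact Relation.ReflTransGen.trans h1 (h3 ▸ h2)

lemma chain_full {m m' : ℕ} (hm : 1 ≤ m) (hmM : m ≤ M) (hm' : 1 ≤ m') (hm'M : m' ≤ M)
    (hL0 : 0 < L) :
    Relation.ReflTransGen (RelB K L M (K + 1))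
      (fun _ : SiteO K L => m) (fun _ : SiteO K L => m') := by
  have h1 := chainA (K := K) (M := M) hm hmM hL0 K (le_refl K)
  have h2 := chainB_out (K := K) (L := L) (M := M) hm hmM hm' hm'M (L - 1) (by omega)
  have h3 := chainC (K := K) (M := M) (L := L) hm' hm'M hL0 K (le_refl K)
  have e0 : cfgA K L m 0 = (fun _ : SiteO K L => m) := cfgA_0
  have e1 : cfgA K L m K = pcc K L m m' 0 0 0 := cfgA_K
  have e2 : cfgC K L m' 0 = pcc K L m m' (L - 1) 0 0 := cfgC_0 hL0
  have e3 : cfgC K L m' K = (fun _ : SiteO K L => m') := cfgC_K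
  rw [e0, e1] at h1
  rw [e2] at h3
  rw [e3] at h3
  exact Relation.ReflTransGen.trans h1 (Relation.ReflTransGen.trans h2 h3)

lemma rtg_path {B : ℕ} {σ τ : SiteO K L → ℕ}
    (h : Relation.ReflTransGen (RelB K L M B) σ τ) :
    IsWRO K L M σ → nzO K L σ ≤ B →
    ∃ ω, IsPathO K L M ω σ τ ∧ ∀ η ∈ ω, nzO K L η ≤ B := by
  induction h using Relation.ReflTransGen.head_induction_on with
  | refl =>
    intro hw hB
    refine ⟨[τ], ⟨by simp, rfl, rfl, ?_, ?_⟩, ?_⟩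
    · intro η hη
      rw [List.mem_singleton] at hη
      rw [hη]; exact hw
    · exact List.isChain_singleton τ
    · intro η hη
      rw [List.mem_singleton] at hη
      rw [hη]; exact hB
  | head h1 h2 ih =>
    intro hw hB
    obtain ⟨hwa, hwc, hu, hBa, hBc⟩ := h1
    obtain ⟨ω, hp, hb⟩ := ih hwc hBc
    obtain ⟨hne, hhead, hlast, hwall, hchain⟩ := hp
    cases ω with
    | nil => exact absurd rfl hne
    | cons x t =>
      have hx : x = _ := Option.some_injective _ hhead
      subst hx
      refine ⟨_ :: x :: t, ⟨by simp, rfl, ?_, ?_, ?_⟩, ?_⟩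
      · rw [List.getLast?_cons_cons]; exact hlast
      · intro η hη
        rcases List.mem_cons.mp hη with rfl | hη'
        · exact hwa
        · exact hwall η hη'
      · exact List.isChain_cons_cons.mpr ⟨Or.inr hu, hchain⟩
      · intro η hη
        rcases List.mem_cons.mp hη with rfl | hη'
        · exact hBa
        · exact hb η hη'

end chains

section transpose
variable {K L M : ℕ}

def trO (K L : ℕ) (σ : SiteO K L → ℕ) : SiteO L K → ℕ := fun v => σ (v.2, v.1)

lemma adj_swap {v w : SiteO L K} :
    adjO L K v w ↔ adjO K L (v.2, v.1) (w.2, w.1) := by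
  constructor
  · rintro (⟨h1, h2⟩ | ⟨h1, h2⟩)
    · exact Or.inr ⟨h1, h2⟩
    · exact Or.inl ⟨h1, h2⟩
  · rintro (⟨h1, h2⟩ | ⟨h1, h2⟩)
    · exact Or.inr ⟨h1, h2⟩
    · exact Or.inl ⟨h1, h2⟩

lemma trO_wr {σ : SiteO K L → ℕ} (h : IsWRO K L M σ) : IsWRO L K M (trO K L σ) :=
  ⟨fun v => h.1 _, fun v w hadj => h.2 _ _ (adj_swap.mp hadj)⟩

lemma trO_upd {σ τ : SiteO K L → ℕ} (h : UpdO K L σ τ) :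
    UpdO L K (trO K L σ) (trO K L τ) := by
  obtain ⟨v, h0, hne, hrest⟩ := h
  refine ⟨(v.2, v.1), h0, hne, ?_⟩
  intro w hw
  apply hrest (w.2, w.1)
  intro hh
  apply hw
  exact Prod.ext (congrArg Prod.snd hh) (congrArg Prod.fst hh)

lemma trO_nz {σ : SiteO K L → ℕ} : nzO L K (trO K L σ) = nzO K L σ := by
  classical
  unfold nzO
  apply Finset.card_bij (fun (v : SiteO L K) _ => ((v.2, v.1) : SiteO K L))
  · intro a ha
    simp only [Finset.mem_filter, Finset.mem_univ, true_and] at ha ⊢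
    exact ha
  · intro a _ b _ h
    exact Prod.ext (congrArg Prod.snd h) (congrArg Prod.fst h)
  · intro b hb
    refine ⟨(b.2, b.1), ?_, rfl⟩
    simp only [Finset.mem_filter, Finset.mem_univ, true_and] at hb ⊢
    exact hb

lemma trO_HO {σ : SiteO K L → ℕ} : HO L K (trO K L σ) = HO K L σ := by
  rw [HO_eq, HO_eq, trO_nz]
  have : K * L = L * K := Nat.mul_comm K L
  rw [this]

lemma trO_path {ω : List (SiteO K L → ℕ)} {σ σ' : SiteO K L → ℕ}
    (h : IsPathO K L M ω σ σ') :
    IsPathO L K M (ω.map (trO K L)) (trO K L σ) (trO K L σ') := by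
  obtain ⟨hne, hhead, hlast, hwr, hchain⟩ := h
  refine ⟨by simp [hne], ?_, ?_, ?_, ?_⟩
  · rw [List.head?_map, hhead]; rfl
  · rw [List.getLast?_map, hlast]; rfl
  · intro η hη
    obtain ⟨η₀, hη₀, rfl⟩ := List.mem_map.mp hη
    exact trO_wr (hwr η₀ hη₀)
  · show List.IsChain _ _
    rw [List.isChain_map]
    refine hchain.imp ?_
    intro η η' hh
    rcases hh with rfl | hh
    · exact Or.inl rfl
    · exact Or.inr (trO_upd hh)

lemma trO_height {ω : List (SiteO K L → ℕ)} :
    heightO L K (ω.map (trO K L)) = heightO K L ω := by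
  unfold heightO
  congr 1
  ext h
  simp only [Set.mem_setOf_eq, List.mem_map]
  constructor
  · rintro ⟨η, ⟨η₀, hη₀, rfl⟩, hh⟩
    exact ⟨η₀, hη₀, by rw [← trO_HO]; exact hh⟩
  · rintro ⟨η₀, hη₀, hh⟩
    exact ⟨trO K L η₀, ⟨η₀, hη₀, rfl⟩, by rw [trO_HO]; exact hh⟩

end transpose

section final
variable {K L M : ℕ}

lemma const_wr {c : ℕ} (hc : c ≤ M) : IsWRO K L M (fun _ : SiteO K L => c) :=
  ⟨fun _ => hc, fun _ _ _ => Or.inr (Or.inr rfl)⟩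

lemma heightO_le {ω : List (SiteO K L → ℕ)} {B : ℤ} (hne : ω ≠ [])
    (hb : ∀ η ∈ ω, HO K L η ≤ B) : heightO K L ω ≤ B := by
  apply csSup_le
  · obtain ⟨x, t, rfl⟩ := List.exists_cons_of_ne_nil hne
    exact ⟨HO K L x, x, by simp, rfl⟩
  · rintro h ⟨η, hη, rfl⟩
    exact hb η hη

lemma le_heightO {ω : List (SiteO K L → ℕ)} {η : SiteO K L → ℕ} (hη : η ∈ ω) :
    HO K L η ≤ heightO K L ω := by
  apply le_csSup
  · refine ⟨0, ?_⟩
    rintro h ⟨η', _, rfl⟩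
    exact HO_le_zero K L η'
  · exact ⟨η, hη, rfl⟩

lemma upper_exists (hK : 2 ≤ K) (hL : 2 ≤ L) {m m' : ℕ}
    (hm : 1 ≤ m) (hmM : m ≤ M) (hm' : 1 ≤ m') (hm'M : m' ≤ M) :
    ∃ ω, IsPathO K L M ω (fun _ : SiteO K L => m) (fun _ : SiteO K L => m') ∧
      ∀ η ∈ ω, nzO K L η ≤ min K L + 1 := by
  rcases le_total K L with hKL | hLK
  · have hrtg := chain_full (K := K) (L := L) (M := M) hm hmM hm' hm'M (by omega)
    obtain ⟨ω, hp, hb⟩ := rtg_path hrtg (const_wr hmM) (by rw [nz_const (by omega)]; omega)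
    refine ⟨ω, hp, fun η hη => ?_⟩
    have := hb η hη
    have hmin : min K L = K := min_eq_left hKL
    omega
  · have hrtg := chain_full (K := L) (L := K) (M := M) hm hmM hm' hm'M (by omega)
    obtain ⟨ω, hp, hb⟩ := rtg_path hrtg (const_wr hmM) (by rw [nz_const (by omega)]; omega)
    have hp' := trO_path (M := M) hp
    refine ⟨ω.map (trO L K), hp', fun η hη => ?_⟩
    obtain ⟨η₀, hη₀, rfl⟩ := List.mem_map.mp hη
    have := hb η₀ hη₀
    have h2 : nzO K L (trO L K η₀) = nzO L K η₀ := trO_nz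
    have hmin : min K L = L := min_eq_right hLK
    omega

end final

/-- Communication height between distinct stable configurations of the
Widom–Rowlinson model on the open `K × L` lattice:
`Φ(s,s') - H(s) = min{K,L} + 1`. -/
theorem comm_height_open (K L M : ℕ)
    (hK : 2 ≤ K) (hL : 2 ≤ L) (hM : 2 ≤ M)
    (s s' : SiteO K L → ℕ) (hs : s ∈ stableO K L M) (hs' : s' ∈ stableO K L M)
    (hne : s ≠ s') :
    commO K L M s s' - HO K L s = ((min K L : ℕ) : ℤ) + 1 := by
  classical
  obtain ⟨a, ha1, haM, rfl⟩ := hs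
  obtain ⟨b, hb1, hbM, rfl⟩ := hs'
  have hab : a ≠ b := by
    intro h; apply hne; funext v; rw [h]
  obtain ⟨ω₀, hp₀, hb₀⟩ := upper_exists (M := M) hK hL ha1 haM hb1 hbM
  have hval : ∀ η ∈ ω₀, HO K L η ≤ ((min K L : ℕ) : ℤ) + 1 - (L * K : ℕ) := by
    intro η hη
    rw [HO_eq]
    have := hb₀ η hη
    push_cast
    omega
  have hS0 : heightO K L ω₀ ≤ ((min K L : ℕ) : ℤ) + 1 - (L * K : ℕ) :=
    heightO_le hp₀.1 hval
  have hlow : ∀ h ∈ {h : ℤ | ∃ ω, IsPathO K L M ω (fun _ => a) (fun _ => b) ∧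
      heightO K L ω = h}, ((min K L : ℕ) : ℤ) + 1 - (L * K : ℕ) ≤ h := by
    rintro h ⟨ω, hp, rfl⟩
    obtain ⟨η, hη, hnz⟩ := path_lower_bound hK hL (by omega) (by omega) hab ω hp
    refine le_trans ?_ (le_heightO hη)
    rw [HO_eq]
    have hle := nz_le K L η
    push_cast
    omega
  have hmem : heightO K L ω₀ ∈ {h : ℤ | ∃ ω, IsPathO K L M ω (fun _ => a) (fun _ => b) ∧
      heightO K L ω = h} := ⟨ω₀, hp₀, rfl⟩
  have h1 : commO K L M (fun _ => a) (fun _ => b) ≤ ((min K L : ℕ) : ℤ) + 1 - (L * K : ℕ) :=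
    le_trans (csInf_le ⟨((min K L : ℕ) : ℤ) + 1 - (L * K : ℕ), hlow⟩ hmem) hS0
  have h2 : ((min K L : ℕ) : ℤ) + 1 - (L * K : ℕ) ≤ commO K L M (fun _ => a) (fun _ => b) :=
    le_csInf ⟨heightO K L ω₀, hmem⟩ hlow
  have hcomm : commO K L M (fun _ => a) (fun _ => b)
      = ((min K L : ℕ) : ℤ) + 1 - (L * K : ℕ) := le_antisymm h1 h2
  have hHs : HO K L (fun _ : SiteO K L => a) = -((L * K : ℕ) : ℤ) := by
    rw [HO_eq, nz_const (by omega)]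
    push_cast
    ring
  rw [hcomm, hHs]
  ring
end

section
/- (Reduction algorithm, periodic boundary conditions.) Consider the Widom–Rowlinson model with M ≥ 2 particle types on the K×L square lattice Λ with periodic boundary conditions. Let m ∈ {1,…,M} and let σ ∈ X be a configuration such that σ(v) ∈ {0, m} for every site v in the first vertical stripe C_1 = c_0 ∪ c_1 (the union of the first two columns). Then there exists a path ω : σ → s^(m) in X with Φ_ω ≤ H(σ) + 1; in particular Φ(σ, s^(m)) − H(σ) ≤ 1. -/
section helpers
variable {K L M : ℕ}

lemma HP_eq (σ : SiteP K L → ℕ) : HP K L σ = -({v | σ v ≠ 0}.ncard : ℤ) := by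
  have h : Nat.card {v : SiteP K L // σ v ≠ 0} = ({v | σ v ≠ 0} : Set (SiteP K L)).ncard :=
    Nat.card_coe_set_eq _
  rw [HP, h]

lemma adjP_symm {v w : SiteP K L} (h : adjP K L v w) : adjP K L w v := by
  rcases h with ⟨h1, h2⟩ | ⟨h1, h2⟩
  · exact Or.inl ⟨h1.symm, h2.symm⟩
  · exact Or.inr ⟨h1.symm, h2.symm⟩

lemma wr_remove {σ : SiteP K L → ℕ} (hσ : IsWRP K L M σ) (v : SiteP K L) :
    IsWRP K L M (Function.update σ v 0) := by
  refine ⟨fun w => ?_, fun x y hxy => ?_⟩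
  · by_cases hw : w = v
    · subst hw; rw [Function.update_self]; exact Nat.zero_le M
    · rw [Function.update_of_ne hw]; exact hσ.1 w
  · by_cases hx : x = v
    · subst hx; rw [Function.update_self]; exact Or.inl rfl
    · by_cases hy : y = v
      · subst hy; rw [Function.update_self]; exact Or.inr (Or.inl rfl)
      · rw [Function.update_of_ne hx, Function.update_of_ne hy]; exact hσ.2 x y hxy

lemma wr_add {σ : SiteP K L → ℕ} {t : ℕ} (hσ : IsWRP K L M σ) (ht : t ≤ M) (v : SiteP K L)
    (hnb : ∀ w, adjP K L v w → σ w = 0 ∨ σ w = t) :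
    IsWRP K L M (Function.update σ v t) := by
  refine ⟨fun w => ?_, fun x y hxy => ?_⟩
  · by_cases hw : w = v
    · subst hw; rw [Function.update_self]; exact ht
    · rw [Function.update_of_ne hw]; exact hσ.1 w
  · by_cases hx : x = v
    · subst hx
      by_cases hy : y = x
      · subst hy; exact Or.inr (Or.inr rfl)
      · rw [Function.update_self, Function.update_of_ne hy]
        rcases hnb y hxy with h | h
        · exact Or.inr (Or.inl h)
        · exact Or.inr (Or.inr h.symm)
    · by_cases hy : y = v
      · subst hy
        rw [Function.update_self, Function.update_of_ne hx]
        rcases hnb x (adjP_symm hxy) with h | h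
        · exact Or.inl h
        · exact Or.inr (Or.inr h)
      · rw [Function.update_of_ne hx, Function.update_of_ne hy]; exact hσ.2 x y hxy

variable [NeZero K] [NeZero L]

lemma HP_remove {σ : SiteP K L → ℕ} {v : SiteP K L} (h : σ v ≠ 0) :
    HP K L (Function.update σ v 0) = HP K L σ + 1 := by
  have hset : {w | Function.update σ v 0 w ≠ 0} = {w | σ w ≠ 0} \ {v} := by
    ext w
    by_cases hw : w = v
    · subst hw; simp [Function.update_self]
    · simp [Function.update_of_ne hw, hw]
  have hmem : v ∈ {w | σ w ≠ 0} := h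
  have hc := Set.ncard_diff_singleton_add_one hmem (Set.toFinite _)
  rw [HP_eq, HP_eq, hset]
  push_cast [← hc]
  ring

lemma HP_add {σ : SiteP K L → ℕ} {v : SiteP K L} {t : ℕ} (h : σ v = 0) (ht : t ≠ 0) :
    HP K L (Function.update σ v t) = HP K L σ - 1 := by
  have hset : {w | Function.update σ v t w ≠ 0} = insert v {w | σ w ≠ 0} := by
    ext w
    by_cases hw : w = v
    · subst hw; simp [Function.update_self, ht]
    · simp [Function.update_of_ne hw, hw]
  have hmem : v ∉ {w | σ w ≠ 0} := by simp [h]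
  have hc := Set.ncard_insert_of_notMem hmem (Set.toFinite _)
  rw [HP_eq, HP_eq, hset, hc]
  push_cast
  ring

lemma updP_update {σ : SiteP K L → ℕ} {v : SiteP K L} {t : ℕ} (hne : σ v ≠ t)
    (h0 : σ v = 0 ∨ t = 0) : UpdP K L σ (Function.update σ v t) := by
  refine ⟨v, ?_, ?_, fun w hw => (Function.update_of_ne hw _ _).symm⟩
  · rcases h0 with h | h
    · exact Or.inl h
    · right; rw [Function.update_self]; exact h
  · rw [Function.update_self]; exact hne

end helpers
section phaseA
variable {K L M : ℕ} [NeZero K] [NeZero L]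

lemma phaseA (m : ℕ) (hm1 : 1 ≤ m) (hmM : m ≤ M) :
    ∀ n (σ : SiteP K L → ℕ), IsWRP K L M σ → (∀ v, σ v = 0 ∨ σ v = m) →
      {v | σ v = 0}.ncard ≤ n →
      ∃ ω, IsPathP K L M ω σ (fun _ => m) ∧ ∀ η ∈ ω, HP K L η ≤ HP K L σ := by
  intro n
  induction n with
  | zero =>
    intro σ hσ hvals hcard
    have hempty : {v | σ v = 0} = ∅ :=
      Set.ncard_eq_zero (Set.toFinite _) |>.mp (Nat.le_zero.mp hcard)
    have hσm : σ = fun _ => m := by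
      funext v
      rcases hvals v with h | h
      · exact absurd (Set.eq_empty_iff_forall_notMem.mp hempty v h) (fun h => h)
      · exact h
    subst hσm
    refine ⟨[fun _ => m], ⟨by simp, rfl, rfl, ?_, List.isChain_singleton _⟩, ?_⟩
    · intro η hη; rw [List.mem_singleton] at hη; subst hη; exact hσ
    · intro η hη; rw [List.mem_singleton] at hη; subst hη; exact le_refl _
  | succ n ih =>
    intro σ hσ hvals hcard
    by_cases hempty : {v | σ v = 0} = ∅
    · have hσm : σ = fun _ => m := by
        funext v
        rcases hvals v with h | h
        · exact absurd (Set.eq_empty_iff_forall_notMem.mp hempty v h) (fun h => h)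
        · exact h
      subst hσm
      refine ⟨[fun _ => m], ⟨by simp, rfl, rfl, ?_, List.isChain_singleton _⟩, ?_⟩
      · intro η hη; rw [List.mem_singleton] at hη; subst hη; exact hσ
      · intro η hη; rw [List.mem_singleton] at hη; subst hη; exact le_refl _
    · obtain ⟨v, hv⟩ := Set.nonempty_iff_ne_empty.mpr hempty
      have hv0 : σ v = 0 := hv
      set σ' := Function.update σ v m with hσ'def
      have hσ' : IsWRP K L M σ' :=
        wr_add hσ hmM v (fun w _ => hvals w)
      have hvals' : ∀ w, σ' w = 0 ∨ σ' w = m := by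
        intro w
        by_cases hw : w = v
        · subst hw; right; rw [hσ'def, Function.update_self]
        · rw [hσ'def, Function.update_of_ne hw]; exact hvals w
      have hset : {w | σ' w = 0} = {w | σ w = 0} \ {v} := by
        ext w
        by_cases hw : w = v
        · subst hw; simp [hσ'def, Function.update_self]; omega
        · simp [hσ'def, Function.update_of_ne hw, hw]
      have hcard' : {w | σ' w = 0}.ncard ≤ n := by
        have := Set.ncard_diff_singleton_add_one hv (Set.toFinite _)
        rw [hset]; omega
      have hHP : HP K L σ' = HP K L σ - 1 := HP_add hv0 (by omega)
      obtain ⟨ω', ⟨hne', hhead', hlast', hwr', hchain'⟩, hht'⟩ := ih σ' hσ' hvals' hcard'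
      refine ⟨σ :: ω', ⟨by simp, rfl, ?_, ?_, ?_⟩, ?_⟩
      · obtain ⟨b, l, rfl⟩ := List.exists_cons_of_ne_nil hne'
        rw [List.getLast?_cons_cons]; exact hlast'
      · intro η hη
        rcases List.mem_cons.mp hη with h | h
        · subst h; exact hσ
        · exact hwr' η h
      · rw [List.Chain', List.isChain_cons]
        refine ⟨fun y hy => ?_, hchain'⟩
        rw [hhead'] at hy
        have h2 : σ' = y := by simpa using hy
        subst h2
        exact Or.inr (updP_update (by omega) (Or.inl hv0))
      · intro η hη
        rcases List.mem_cons.mp hη with h | h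
        · subst h; exact le_refl _
        · have := hht' η h; omega

end phaseA
section phaseB
variable {K L M : ℕ} [NeZero K] [NeZero L]

lemma phaseB (m : ℕ) (hm1 : 1 ≤ m) (hmM : m ≤ M) (hL : 2 ≤ L) :
    ∀ n (σ : SiteP K L → ℕ), IsWRP K L M σ →
      (∀ v : SiteP K L, v.1 = 0 ∨ v.1 = 1 → σ v = 0 ∨ σ v = m) →
      {v | σ v ≠ 0 ∧ σ v ≠ m}.ncard ≤ n →
      ∃ τ ω, IsPathP K L M ω σ τ ∧ (∀ v, τ v = 0 ∨ τ v = m) ∧ HP K L τ = HP K L σ ∧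
        ∀ η ∈ ω, HP K L η ≤ HP K L σ + 1 := by
  intro n
  induction n with
  | zero =>
    intro σ hσ hstripe hcard
    have hempty : {v : SiteP K L | σ v ≠ 0 ∧ σ v ≠ m} = ∅ :=
      (Set.ncard_eq_zero (Set.toFinite _)).mp (Nat.le_zero.mp hcard)
    refine ⟨σ, [σ], ⟨by simp, rfl, rfl, ?_, List.isChain_singleton _⟩, ?_, rfl, ?_⟩
    · intro η hη; rw [List.mem_singleton] at hη; subst hη; exact hσ
    · intro v
      by_contra hcon
      push_neg at hcon
      exact Set.eq_empty_iff_forall_notMem.mp hempty v hcon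
    · intro η hη; rw [List.mem_singleton] at hη; subst hη; omega
  | succ n ih =>
    intro σ hσ hstripe hcard
    by_cases hempty : {v : SiteP K L | σ v ≠ 0 ∧ σ v ≠ m} = ∅
    · refine ⟨σ, [σ], ⟨by simp, rfl, rfl, ?_, List.isChain_singleton _⟩, ?_, rfl, ?_⟩
      · intro η hη; rw [List.mem_singleton] at hη; subst hη; exact hσ
      · intro v
        by_contra hcon
        push_neg at hcon
        exact Set.eq_empty_iff_forall_notMem.mp hempty v hcon
      · intro η hη; rw [List.mem_singleton] at hη; subst hη; omega
    · classical
      obtain ⟨v0, hv0⟩ := Set.nonempty_iff_ne_empty.mpr hempty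
      set P : ℕ → Prop := fun j => j < L ∧ ∃ i : ZMod K, σ (↑j, i) ≠ 0 ∧ σ (↑j, i) ≠ m with hPdef
      have hv0' : (((v0.1.val : ℕ) : ZMod L), v0.2) = v0 :=
        Prod.ext_iff.mpr ⟨ZMod.natCast_rightInverse v0.1, rfl⟩
      have hP : ∃ j, P j := ⟨v0.1.val, ZMod.val_lt v0.1, v0.2, by rw [hv0']; exact hv0.1,
        by rw [hv0']; exact hv0.2⟩
      set j := Nat.find hP with hjdef
      have hjL : j < L := (Nat.find_spec hP).1
      obtain ⟨i, hi0, him⟩ := (Nat.find_spec hP).2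
      have hmin : ∀ k, k < j → ¬ P k := fun k hk => Nat.find_min hP hk
      have cast_inj : ∀ a b : ℕ, a < L → b < L → ((a : ℕ) : ZMod L) = ((b : ℕ) : ZMod L) → a = b := by
        intro a b ha hb h
        have := congrArg ZMod.val h
        rwa [ZMod.val_cast_of_lt ha, ZMod.val_cast_of_lt hb] at this
      have hkey : ∀ k, k < 2 → ¬ P k := by
        intro k hk hPk
        obtain ⟨hkL, i', h1, h2⟩ := hPk
        interval_cases k
        · rcases hstripe (((0:ℕ) : ZMod L), i') (Or.inl (by push_cast; rfl)) with hh | hh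
          · exact h1 hh
          · exact h2 hh
        · rcases hstripe (((1:ℕ) : ZMod L), i') (Or.inr (by push_cast; rfl)) with hh | hh
          · exact h1 hh
          · exact h2 hh
      have hj2 : 2 ≤ j := by
        by_contra hcon
        exact hkey j (by omega) (Nat.find_spec hP)
      have hclean : ∀ k, k < j → ∀ w : SiteP K L, w.1 = (k : ZMod L) → σ w = 0 ∨ σ w = m := by
        intro k hk w hw
        by_contra hcon
        push_neg at hcon
        have hw' : ((k : ZMod L), w.2) = w := Prod.ext_iff.mpr ⟨hw.symm, rfl⟩
        exact hmin k hk ⟨lt_trans hk hjL, w.2, by rw [hw']; exact hcon.1, by rw [hw']; exact hcon.2⟩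
      have e1 : ((j - 1 : ℕ) : ZMod L) + 1 = ((j : ℕ) : ZMod L) := by
        have h : (j - 1) + 1 = j := by omega
        conv_rhs => rw [← h]
        rw [Nat.cast_add_one]
      have e2 : ((j - 2 : ℕ) : ZMod L) + 1 = ((j - 1 : ℕ) : ZMod L) := by
        have h : (j - 2) + 1 = j - 1 := by omega
        conv_rhs => rw [← h]
        rw [Nat.cast_add_one]
      have d1 : ((j - 1 : ℕ) : ZMod L) ≠ ((j : ℕ) : ZMod L) := by
        intro h
        have := cast_inj _ _ (by omega) hjL h
        omega
      have d2 : ((j - 2 : ℕ) : ZMod L) ≠ ((j : ℕ) : ZMod L) := by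
        intro h
        have := cast_inj _ _ (by omega) hjL h
        omega
      set v : SiteP K L := (((j : ℕ) : ZMod L), i) with hvdef
      set u : SiteP K L := (((j - 1 : ℕ) : ZMod L), i) with hudef
      have huv : u ≠ v := fun h => d1 (congrArg Prod.fst h)
      have hvu : v ≠ u := fun h => d1 (congrArg Prod.fst h).symm
      have adj_uv : adjP K L u v := Or.inl ⟨rfl, Or.inl e1.symm⟩
      have hu0 : σ u = 0 := by
        rcases hclean (j - 1) (by omega) u rfl with h | h
        · exact h
        · exfalso
          rcases hσ.2 u v adj_uv with h0 | h0 | h0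
          · rw [h] at h0; omega
          · exact hi0 h0
          · rw [h] at h0; exact him h0.symm
      set σ₁ := Function.update σ v 0 with hσ₁def
      set σ₂ := Function.update σ₁ u m with hσ₂def
      have hσ₁wr : IsWRP K L M σ₁ := wr_remove hσ v
      have hσ₁u : σ₁ u = 0 := by rw [hσ₁def, Function.update_of_ne huv]; exact hu0
      have hσ₁v : σ₁ v = 0 := by rw [hσ₁def, Function.update_self]
      have hnb : ∀ w, adjP K L u w → σ₁ w = 0 ∨ σ₁ w = m := by
        intro w hw
        rcases hw with ⟨hw2, hw1⟩ | ⟨hw1, hw2⟩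
        · rcases hw1 with h | h
          · have hwv : w = v := Prod.ext_iff.mpr ⟨h.trans e1, hw2.symm⟩
            left; rw [hwv]; exact hσ₁v
          · have hw1' : w.1 = ((j - 2 : ℕ) : ZMod L) := by
              have h' : w.1 + 1 = ((j - 2 : ℕ) : ZMod L) + 1 := by rw [e2, ← h]
              exact add_right_cancel h'
            have hwv : w ≠ v := fun hh => d2 (hw1' ▸ congrArg Prod.fst hh)
            rw [hσ₁def, Function.update_of_ne hwv]
            exact hclean (j - 2) (by omega) w hw1'
        · have hwv : w ≠ v := fun hh => d1 (hw1.trans (congrArg Prod.fst hh))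
          rw [hσ₁def, Function.update_of_ne hwv]
          exact hclean (j - 1) (by omega) w hw1.symm
      have hσ₂wr : IsWRP K L M σ₂ := wr_add hσ₁wr hmM u hnb
      have hσ₂u : σ₂ u = m := by rw [hσ₂def, Function.update_self]
      have hσ₂v : σ₂ v = 0 := by rw [hσ₂def, Function.update_of_ne hvu]; exact hσ₁v
      have hσ₂w : ∀ w, w ≠ u → w ≠ v → σ₂ w = σ w := by
        intro w hwu hwv
        rw [hσ₂def, Function.update_of_ne hwu, hσ₁def, Function.update_of_ne hwv]
      have hstripe₂ : ∀ w : SiteP K L, w.1 = 0 ∨ w.1 = 1 → σ₂ w = 0 ∨ σ₂ w = m := by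
        intro w hw
        by_cases hwu : w = u
        · right; rw [hwu]; exact hσ₂u
        · by_cases hwv : w = v
          · left; rw [hwv]; exact hσ₂v
          · rw [hσ₂w w hwu hwv]; exact hstripe w hw
      have hset : {w | σ₂ w ≠ 0 ∧ σ₂ w ≠ m} = {w | σ w ≠ 0 ∧ σ w ≠ m} \ {v} := by
        ext w
        by_cases hwu : w = u
        · subst hwu; simp [hσ₂u, hu0]
        · by_cases hwv : w = v
          · subst hwv; simp [hσ₂v]
          · simp [hσ₂w w hwu hwv, hwv]
      have hvmem : v ∈ {w : SiteP K L | σ w ≠ 0 ∧ σ w ≠ m} := ⟨hi0, him⟩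
      have hcard₂ : {w | σ₂ w ≠ 0 ∧ σ₂ w ≠ m}.ncard ≤ n := by
        have := Set.ncard_diff_singleton_add_one hvmem (Set.toFinite _)
        rw [hset]; omega
      have hH1 : HP K L σ₁ = HP K L σ + 1 := HP_remove hi0
      have hH2 : HP K L σ₂ = HP K L σ := by
        rw [hσ₂def, HP_add hσ₁u (by omega), hH1]; ring
      obtain ⟨τ, ω', ⟨hne', hhead', hlast', hwr', hchain'⟩, hvals', hHτ, hht'⟩ :=
        ih σ₂ hσ₂wr hstripe₂ hcard₂
      refine ⟨τ, σ :: σ₁ :: ω', ⟨by simp, rfl, ?_, ?_, ?_⟩, hvals', by rw [hHτ, hH2], ?_⟩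
      · obtain ⟨b, l, rfl⟩ := List.exists_cons_of_ne_nil hne'
        rw [List.getLast?_cons_cons, List.getLast?_cons_cons]; exact hlast'
      · intro η hη
        rcases List.mem_cons.mp hη with h | h
        · subst h; exact hσ
        · rcases List.mem_cons.mp h with h' | h'
          · subst h'; exact hσ₁wr
          · exact hwr' η h'
      · rw [List.Chain', List.isChain_cons]
        constructor
        · intro y hy
          have h2 : σ₁ = y := by simpa using hy
          subst h2
          exact Or.inr (updP_update hi0 (Or.inr rfl))
        · rw [List.isChain_cons]
          constructor
          · intro y hy
            rw [hhead'] at hy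
            have h2 : σ₂ = y := by simpa using hy
            subst h2
            exact Or.inr (updP_update (by rw [hσ₁u]; omega) (Or.inl hσ₁u))
          · exact hchain'
      · intro η hη
        rcases List.mem_cons.mp hη with h | h
        · subst h; omega
        · rcases List.mem_cons.mp h with h' | h'
          · subst h'; omega
          · have := hht' η h'; omega

end phaseB
/-- Reduction algorithm, periodic boundary conditions: if `σ ∈ X` has only
empty sites or particles of type `m` in the first vertical stripe
`C_1 = c_0 ∪ c_1`, then there is a path `ω : σ → s^(m)` with
`Φ_ω ≤ H(σ) + 1`; in particular `Φ(σ, s^(m)) - H(σ) ≤ 1`. -/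
theorem reduction_algorithm_periodic (K L M : ℕ)
    (hK : 2 ≤ K) (hL : 2 ≤ L) (hM : 2 ≤ M)
    (m : ℕ) (hm1 : 1 ≤ m) (hmM : m ≤ M)
    (σ : SiteP K L → ℕ) (hσ : IsWRP K L M σ)
    (hstripe : ∀ v : SiteP K L, v.1 = 0 ∨ v.1 = 1 → σ v = 0 ∨ σ v = m) :
    (∃ ω : List (SiteP K L → ℕ),
      IsPathP K L M ω σ (fun _ => m) ∧ heightP K L ω ≤ HP K L σ + 1) ∧
    commP K L M σ (fun _ => m) - HP K L σ ≤ 1 := by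
  haveI : NeZero K := ⟨by omega⟩
  haveI : NeZero L := ⟨by omega⟩
  obtain ⟨τ, ω₁, ⟨hne₁, hhead₁, hlast₁, hwr₁, hchain₁⟩, hvalsτ, hHτ, hht₁⟩ :=
    phaseB m hm1 hmM hL ({v | σ v ≠ 0 ∧ σ v ≠ m}.ncard) σ hσ hstripe (le_refl _)
  have hτmem : τ ∈ ω₁ := List.mem_of_mem_getLast? (by rw [hlast₁]; rfl)
  obtain ⟨ω₂, ⟨hne₂, hhead₂, hlast₂, hwr₂, hchain₂⟩, hht₂⟩ :=
    phaseA m hm1 hmM ({v | τ v = 0}.ncard) τ (hwr₁ τ hτmem) hvalsτ (le_refl _)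
  set ω := ω₁ ++ ω₂ with hωdef
  have hpath : IsPathP K L M ω σ (fun _ => m) := by
    refine ⟨fun h => hne₁ (List.append_eq_nil_iff.mp h).1, ?_, ?_, ?_, ?_⟩
    · rw [hωdef, List.head?_append_of_ne_nil ω₁ hne₁]; exact hhead₁
    · rw [hωdef, List.getLast?_append_of_ne_nil ω₁ hne₂]; exact hlast₂
    · intro η hη
      rcases List.mem_append.mp hη with h | h
      · exact hwr₁ η h
      · exact hwr₂ η h
    · rw [hωdef, List.Chain', List.isChain_append]
      refine ⟨hchain₁, hchain₂, fun x hx y hy => ?_⟩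
      rw [hlast₁] at hx
      rw [hhead₂] at hy
      have hx' : τ = x := by simpa using hx
      have hy' : τ = y := by simpa using hy
      exact Or.inl (hx'.symm.trans hy')
  have hall : ∀ η ∈ ω, HP K L η ≤ HP K L σ + 1 := by
    intro η hη
    rcases List.mem_append.mp hη with h | h
    · exact hht₁ η h
    · have := hht₂ η h; omega
  have hσmem : σ ∈ ω := List.mem_of_mem_head? (by rw [hpath.2.1]; rfl)
  have hheight : heightP K L ω ≤ HP K L σ + 1 := by
    have hne : {h : ℤ | ∃ η ∈ ω, HP K L η = h}.Nonempty := ⟨HP K L σ, σ, hσmem, rfl⟩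
    apply csSup_le hne
    rintro h ⟨η, hη, rfl⟩
    exact hall η hη
  refine ⟨⟨ω, hpath, hheight⟩, ?_⟩
  have hBdd : BddBelow {h : ℤ | ∃ ω', IsPathP K L M ω' σ (fun _ => m) ∧ heightP K L ω' = h} := by
    refine ⟨-(Nat.card (SiteP K L) : ℤ), ?_⟩
    rintro h ⟨ω', hp', rfl⟩
    have hmem : σ ∈ ω' := List.mem_of_mem_head? (by rw [hp'.2.1]; rfl)
    have h1 : HP K L σ ≤ heightP K L ω' := by
      apply le_csSup
      · refine ⟨0, ?_⟩
        rintro x ⟨η, _, rfl⟩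
        rw [HP_eq]
        omega
      · exact ⟨σ, hmem, rfl⟩
    have h2 : -(Nat.card (SiteP K L) : ℤ) ≤ HP K L σ := by
      rw [HP_eq]
      have : ({v | σ v ≠ 0} : Set (SiteP K L)).ncard ≤ Nat.card (SiteP K L) := by
        rw [← Set.ncard_univ]
        exact Set.ncard_le_ncard (Set.subset_univ _) Set.finite_univ
      omega
    linarith
  have h3 : commP K L M σ (fun _ => m) ≤ heightP K L ω := csInf_le hBdd ⟨ω, hpath, rfl⟩
  linarith
end
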